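/- arXiv:2102.02504 — 8 statements merged into one kernel-verified Lean document; each statement's English description precedes it below -/
import Mathlib

section
/- Let E be a real inner product space, Λ ⊆ E a nonempty convex set, α > 0, L ≥ 0, and let f : E → ℝ be convex on Λ and L-Lipschitz on Λ (|f(λ)-f(λ')| ≤ L‖λ-λ'‖ for λ,λ' ∈ Λ). Let x ∈ Λ and suppose μ ∈ Λ minimizes the map λ ↦ f(λ) + ‖λ-x‖²/(2α) over Λ. Then for every λ ∈ Λ: f(x) ≤ f(λ) + (‖λ-x‖² - ‖λ-μ‖²)/(2α) + αL²/2. -/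
lemma combo_norm_sq {E : Type*} [NormedAddCommGroup E] [InnerProductSpace ℝ E]
    (a b : E) (s : ℝ) :
    ‖s • a + (1 - s) • b‖ ^ 2
      = s * ‖a‖ ^ 2 + (1 - s) * ‖b‖ ^ 2 - s * (1 - s) * ‖a - b‖ ^ 2 := by
  have h1 := @norm_add_sq_real E _ _ (s • a) ((1 - s) • b)
  have h2 := @norm_sub_sq_real E _ _ a b
  have hs : ‖s • a‖ ^ 2 = s ^ 2 * ‖a‖ ^ 2 := by
    rw [norm_smul]; simp [mul_pow, sq_abs]
  have hs2 : ‖(1 - s) • b‖ ^ 2 = (1 - s) ^ 2 * ‖b‖ ^ 2 := by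
    rw [norm_smul]; simp [mul_pow, sq_abs]
  have hi : inner ℝ (s • a) ((1 - s) • b) = s * (1 - s) * (inner ℝ a b : ℝ) := by
    rw [real_inner_smul_left, real_inner_smul_right]; ring
  rw [h1, hs, hs2, hi, h2]; ring

/-- Per-step inequality for the online proximal meta-strategy (OPMS). -/
theorem opms_per_step_inequality
    {E : Type*} [NormedAddCommGroup E] [InnerProductSpace ℝ E]
    (Λ : Set E) (hΛ : Convex ℝ Λ) (hne : Λ.Nonempty)
    (α L : ℝ) (hα : 0 < α) (hL : 0 ≤ L) (f : E → ℝ)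
    (hconv : ∀ a ∈ Λ, ∀ b ∈ Λ, ∀ s : ℝ, 0 ≤ s → s ≤ 1 →
      f (s • a + (1 - s) • b) ≤ s * f a + (1 - s) * f b)
    (hlip : ∀ a ∈ Λ, ∀ b ∈ Λ, |f a - f b| ≤ L * ‖a - b‖)
    (x : E) (hx : x ∈ Λ) (μ : E) (hμ : μ ∈ Λ)
    (hmin : ∀ lam ∈ Λ, f μ + ‖μ - x‖ ^ 2 / (2 * α) ≤ f lam + ‖lam - x‖ ^ 2 / (2 * α)) :
    ∀ lam ∈ Λ,
      f x ≤ f lam + (‖lam - x‖ ^ 2 - ‖lam - μ‖ ^ 2) / (2 * α) + α * L ^ 2 / 2 := by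
  intro lam hlam
  have h2α : (0:ℝ) < 2 * α := by linarith
  have hc0 : (0:ℝ) ≤ ‖lam - μ‖ ^ 2 / (2 * α) := by positivity
  set A : ℝ := f μ + ‖μ - x‖ ^ 2 / (2 * α) with hA
  set B : ℝ := f lam + ‖lam - x‖ ^ 2 / (2 * α) with hB
  set c : ℝ := ‖lam - μ‖ ^ 2 / (2 * α) with hc
  clear_value A B c
  -- strong convexity step, for each s ∈ (0,1]
  have hstep : ∀ s : ℝ, 0 < s → s ≤ 1 → A + (1 - s) * c ≤ B := by
    intro s hs0 hs1
    have hz : s • lam + (1 - s) • μ ∈ Λ :=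
      hΛ hlam hμ hs0.le (by linarith) (by ring)
    have h1 := hmin _ hz
    have h2 := hconv lam hlam μ hμ s hs0.le hs1
    have h3 : ‖s • lam + (1 - s) • μ - x‖ ^ 2
        = s * ‖lam - x‖ ^ 2 + (1 - s) * ‖μ - x‖ ^ 2 - s * (1 - s) * ‖lam - μ‖ ^ 2 := by
      have hid : s • lam + (1 - s) • μ - x = s • (lam - x) + (1 - s) • (μ - x) := by
        module
      rw [hid, combo_norm_sq]
      congr 2
      abel
    rw [h3] at h1
    have hdiv : (s * ‖lam - x‖ ^ 2 + (1 - s) * ‖μ - x‖ ^ 2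
          - s * (1 - s) * ‖lam - μ‖ ^ 2) / (2 * α)
        = s * (‖lam - x‖ ^ 2 / (2 * α)) + (1 - s) * (‖μ - x‖ ^ 2 / (2 * α))
          - s * (1 - s) * (‖lam - μ‖ ^ 2 / (2 * α)) := by ring
    rw [hdiv] at h1
    have h5 : A ≤ s * B + (1 - s) * A - s * (1 - s) * c := by
      rw [hA, hB, hc]; nlinarith [h1, h2]
    have h4 : s * (A + (1 - s) * c) ≤ s * B := by nlinarith [h5]
    exact le_of_mul_le_mul_left h4 hs0
  -- pass to the limit s → 0⁺
  have key : A + c ≤ B := by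
    refine le_of_forall_pos_le_add ?_
    intro ε hε
    have hsc : 0 < ε / (c + 1) := by positivity
    have hs0 : 0 < min 1 (ε / (c + 1)) := lt_min one_pos hsc
    have h := hstep _ hs0 (min_le_left _ _)
    have hsle : min 1 (ε / (c + 1)) ≤ ε / (c + 1) := min_le_right _ _
    have hsc2 : min 1 (ε / (c + 1)) * c ≤ ε := by
      have h1 : min 1 (ε / (c + 1)) * c ≤ (ε / (c + 1)) * c := by nlinarith
      have h2 : (ε / (c + 1)) * c ≤ ε := by
        rw [div_mul_eq_mul_div, div_le_iff₀ (by linarith)]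
        nlinarith
      linarith
    linarith
  -- Lipschitz + AM-GM step
  have hxf : f x ≤ f μ + L * ‖x - μ‖ := by
    have h := abs_le.mp (hlip x hx μ hμ)
    linarith [h.2]
  have hamgm : L * ‖x - μ‖ ≤ ‖μ - x‖ ^ 2 / (2 * α) + α * L ^ 2 / 2 := by
    rw [norm_sub_rev]
    have ht : 0 ≤ ‖μ - x‖ := norm_nonneg _
    rw [div_add_div _ _ (by linarith : (2*α) ≠ 0) (two_ne_zero),
      le_div_iff₀ (by positivity)]
    nlinarith [sq_nonneg (‖μ - x‖ - α * L)]
  have hfin : (‖lam - x‖ ^ 2 - ‖lam - μ‖ ^ 2) / (2 * α)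
      = ‖lam - x‖ ^ 2 / (2 * α) - c := by
    rw [hc, sub_div]
  rw [hfin]
  have hAx : f x ≤ A + α * L ^ 2 / 2 := by rw [hA]; linarith
  rw [hA, hB, hc] at key
  linarith
end

section
/- Let E be a real inner product space, Λ ⊆ E a nonempty convex set, α > 0, L ≥ 0, and T ≥ 1 a natural number. For each t ∈ {1,…,T} let f_t : E → ℝ be convex on Λ and L-Lipschitz on Λ. Let λ_1 ∈ Λ and, for t = 1,…,T, let λ_{t+1} ∈ Λ minimize the map λ ↦ f_t(λ) + ‖λ - λ_t‖²/(2α) over Λ. Then for every λ ∈ Λ: Σ_{t=1}^T f_t(λ_t) ≤ Σ_{t=1}^T f_t(λ) + αTL²/2 + ‖λ - λ_1‖²/(2α). -/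
/-- Proposition 1 of the paper, for the online proximal meta-strategy (OPMS). -/
theorem opms_regret_bound
    {E : Type*} [NormedAddCommGroup E] [InnerProductSpace ℝ E]
    (Λ : Set E) (hΛ : Convex ℝ Λ) (hne : Λ.Nonempty)
    (α L : ℝ) (hα : 0 < α) (hL : 0 ≤ L) (T : ℕ) (hT : 1 ≤ T)
    (f : ℕ → E → ℝ)
    (hconv : ∀ t ∈ Finset.Icc 1 T, ∀ a ∈ Λ, ∀ b ∈ Λ, ∀ s : ℝ, 0 ≤ s → s ≤ 1 →
      f t (s • a + (1 - s) • b) ≤ s * f t a + (1 - s) * f t b)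
    (hlip : ∀ t ∈ Finset.Icc 1 T, ∀ a ∈ Λ, ∀ b ∈ Λ, |f t a - f t b| ≤ L * ‖a - b‖)
    (lam : ℕ → E) (hlam1 : lam 1 ∈ Λ)
    (hmem : ∀ t ∈ Finset.Icc 1 T, lam (t + 1) ∈ Λ)
    (hmin : ∀ t ∈ Finset.Icc 1 T, ∀ l ∈ Λ,
      f t (lam (t + 1)) + ‖lam (t + 1) - lam t‖ ^ 2 / (2 * α) ≤
        f t l + ‖l - lam t‖ ^ 2 / (2 * α)) :
    ∀ l ∈ Λ,
      ∑ t ∈ Finset.Icc 1 T, f t (lam t) ≤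
        ∑ t ∈ Finset.Icc 1 T, f t l + α * T * L ^ 2 / 2 + ‖l - lam 1‖ ^ 2 / (2 * α) := by
  intro l hl
  have hmemT : ∀ t ∈ Finset.Icc 1 T, lam t ∈ Λ := by
    intro t ht
    simp only [Finset.mem_Icc] at ht
    rcases Nat.exists_eq_add_of_le ht.1 with ⟨k, hk⟩
    cases k with
    | zero => rw [hk]; simpa using hlam1
    | succ k =>
      have hmem' : (1 + k) ∈ Finset.Icc 1 T := by simp; omega
      have := hmem (1 + k) hmem'
      have heq : t = (1 + k) + 1 := by omega
      rw [heq]; exact this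
  -- key per-step bound
  have key : ∀ t ∈ Finset.Icc 1 T,
      f t (lam t) ≤ f t l + α * L ^ 2 / 2 +
        (‖l - lam t‖ ^ 2 - ‖l - lam (t + 1)‖ ^ 2) / (2 * α) := by
    intro t ht
    set u : E := l - lam t with hu
    set v : E := lam (t + 1) - lam t with hv
    set w : E := l - lam (t + 1) with hwdef
    have hw : w = u - v := by rw [hu, hv, hwdef]; abel
    -- first order inequality
    have h1 : f t (lam (t + 1)) ≤ f t l + (inner ℝ v w : ℝ) / α := by
      rw [← sub_le_iff_le_add']
      apply le_of_forall_pos_le_add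
      intro ε hε
      set s : ℝ := min 1 (2 * α * ε / (‖w‖ ^ 2 + 1)) with hsdef
      have hden : (0:ℝ) < ‖w‖ ^ 2 + 1 := by positivity
      have hs0 : 0 < s := by
        apply lt_min one_pos
        positivity
      have hs1 : s ≤ 1 := min_le_left _ _
      have hp : s • l + (1 - s) • lam (t + 1) ∈ Λ :=
        hΛ hl (hmem t ht) hs0.le (by linarith) (by ring)
      have h2 := hmin t ht _ hp
      have h3 := hconv t ht l hl (lam (t + 1)) (hmem t ht) s hs0.le hs1
      have hpt : (s • l + (1 - s) • lam (t + 1)) - lam t = v + s • w := by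
        rw [hv, hwdef]
        module
      have hnorm : ‖(s • l + (1 - s) • lam (t + 1)) - lam t‖ ^ 2
          = ‖v‖ ^ 2 + 2 * s * (inner ℝ v w : ℝ) + s ^ 2 * ‖w‖ ^ 2 := by
        rw [hpt, norm_add_sq_real, real_inner_smul_right, norm_smul]
        simp [mul_pow, sq_abs]
        ring
      rw [hnorm] at h2
      set A := f t (lam (t + 1)) with hA
      set B := f t l with hB
      set I := (inner ℝ v w : ℝ) with hI
      set W := ‖w‖ ^ 2 with hW
      -- from h2 and h3: s * (A - B) ≤ (2 s I + s² W) / (2α)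
      have h5 : s * (A - B) ≤ s * (I / α + s * W / (2 * α)) := by
        have hid : s * (I / α + s * W / (2 * α)) = (2 * s * I + s ^ 2 * W) / (2 * α) := by
          field_simp
        rw [hid]
        have hdiv : (‖v‖ ^ 2 + 2 * s * I + s ^ 2 * W) / (2 * α)
            = ‖v‖ ^ 2 / (2 * α) + (2 * s * I + s ^ 2 * W) / (2 * α) := by
          rw [← add_div]
          ring_nf
        rw [hdiv] at h2
        nlinarith [h2.trans (by linarith : f t (s • l + (1 - s) • lam (t + 1)) +
          (‖v‖ ^ 2 / (2 * α) + (2 * s * I + s ^ 2 * W) / (2 * α)) ≤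
          s * B + (1 - s) * A + (‖v‖ ^ 2 / (2 * α) + (2 * s * I + s ^ 2 * W) / (2 * α)))]
      have h4 : A - B ≤ I / α + s * W / (2 * α) := le_of_mul_le_mul_left h5 hs0
      have h6 : s * W / (2 * α) ≤ ε := by
        have hsle : s ≤ 2 * α * ε / (‖w‖ ^ 2 + 1) := min_le_right _ _
        rw [div_le_iff₀ (by positivity)]
        have hWnn : (0:ℝ) ≤ W := by rw [hW]; positivity
        have : s * (‖w‖ ^ 2 + 1) ≤ 2 * α * ε := by
          rw [← le_div_iff₀ hden]; exact hsle
        nlinarith [hs0.le]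
      linarith
    -- inner product identity
    have hid : (inner ℝ v w : ℝ) = (‖u‖ ^ 2 - ‖v‖ ^ 2 - ‖w‖ ^ 2) / 2 := by
      have h7 : ‖w‖ ^ 2 = ‖u‖ ^ 2 - 2 * (inner ℝ u v : ℝ) + ‖v‖ ^ 2 := by
        rw [hw, norm_sub_sq_real]
      have h8 : (inner ℝ v w : ℝ) = (inner ℝ v u : ℝ) - ‖v‖ ^ 2 := by
        rw [hw, inner_sub_right, real_inner_self_eq_norm_sq]
      rw [h8, real_inner_comm]
      linarith
    -- Lipschitz step
    have h9 : f t (lam t) ≤ f t (lam (t + 1)) + L * ‖v‖ := by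
      have := hlip t ht (lam t) (hmemT t ht) (lam (t + 1)) (hmem t ht)
      have habs := abs_le.mp this
      have : ‖lam t - lam (t + 1)‖ = ‖v‖ := by rw [hv, norm_sub_rev]
      rw [this] at habs
      linarith [habs.2]
    -- quadratic bound: L‖v‖ - ‖v‖²/(2α) ≤ αL²/2
    have h6 : L * ‖v‖ ≤ α * L ^ 2 / 2 + ‖v‖ ^ 2 / (2 * α) := by
      have h2α : (0:ℝ) < 2 * α := by linarith
      have hnn := div_nonneg (sq_nonneg (α * L - ‖v‖)) h2α.le
      have hexp : (α * L - ‖v‖) ^ 2 / (2 * α) = α * L ^ 2 / 2 + ‖v‖ ^ 2 / (2 * α) - L * ‖v‖ := by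
        field_simp
        ring
      linarith
    have hgoal : (‖u‖ ^ 2 - ‖w‖ ^ 2) / (2 * α)
        = (inner ℝ v w : ℝ) / α + ‖v‖ ^ 2 / (2 * α) := by
      rw [hid]; field_simp; ring
    rw [hu, hwdef] at hgoal ⊢
    linarith [h1, h9, h6, hgoal]
  have hsum := Finset.sum_le_sum key
  rw [Finset.sum_add_distrib, Finset.sum_add_distrib] at hsum
  have hcard : (Finset.Icc 1 T).card = T := by rw [Nat.card_Icc]; omega
  have hconst : ∑ _t ∈ Finset.Icc 1 T, (α * L ^ 2 / 2) = (T : ℝ) * (α * L ^ 2 / 2) := by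
    rw [Finset.sum_const, hcard, nsmul_eq_mul]
  have htel : ∑ t ∈ Finset.Icc 1 T, (‖l - lam t‖ ^ 2 - ‖l - lam (t + 1)‖ ^ 2)
      = ‖l - lam 1‖ ^ 2 - ‖l - lam (1 + T)‖ ^ 2 := by
    rw [← Finset.Ico_add_one_right_eq_Icc, Finset.sum_Ico_eq_sum_range]
    exact Finset.sum_range_sub' (fun i => ‖l - lam (1 + i)‖ ^ 2) T
  have hdiv : ∑ t ∈ Finset.Icc 1 T, (‖l - lam t‖ ^ 2 - ‖l - lam (t + 1)‖ ^ 2) / (2 * α)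
      = (‖l - lam 1‖ ^ 2 - ‖l - lam (1 + T)‖ ^ 2) / (2 * α) := by
    rw [← Finset.sum_div, htel]
  rw [hconst, hdiv] at hsum
  have hlast : (‖l - lam 1‖ ^ 2 - ‖l - lam (1 + T)‖ ^ 2) / (2 * α)
      ≤ ‖l - lam 1‖ ^ 2 / (2 * α) := by
    gcongr
    nlinarith [sq_nonneg ‖l - lam (1 + T)‖]
  have hring : α * (T : ℝ) * L ^ 2 / 2 = (T : ℝ) * (α * L ^ 2 / 2) := by ring
  linarith
end

section
/- Let d ≥ 1, n ≥ 1 be natural numbers, Γ > 0, C > 0, and 0 < γ̲ < γ̄ < ∞. For i = 1,…,n let ℓ_i : ℝ^d → ℝ be convex and Γ-Lipschitz. Define, for ϑ ∈ ℝ^d with ‖ϑ‖ ≤ C and γ ∈ [γ̲, γ̄], the meta-loss L(ϑ,γ) = inf_{θ : ‖θ‖ ≤ C} { Σ_{i=1}^n ℓ_i(θ) + γΓ²n/2 + ‖θ-ϑ‖²/(2γ) }. Then L is convex on Λ = {ϑ : ‖ϑ‖ ≤ C} × [γ̲, γ̄], and L is Lipschitz on Λ with constant √(n²Γ⁴/4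 + 4C²/γ̲² + 4C⁴/γ̲⁴), where the distance between (ϑ,γ) and (ϑ',γ') is √(‖ϑ-ϑ'‖² + (γ-γ')²). -/
private lemma cs2 (a b x y : ℝ) (ha : 0 ≤ a) (hb : 0 ≤ b) (hx : 0 ≤ x) :
    a*x + b*|y| ≤ Real.sqrt (a^2+b^2) * Real.sqrt (x^2+y^2) := by
  rw [← Real.sqrt_mul (by positivity)]
  apply (Real.le_sqrt (by positivity) (by positivity)).2
  nlinarith [sq_nonneg (a*|y| - b*x), sq_abs y, abs_nonneg y,
    mul_nonneg (mul_nonneg ha hx) (mul_nonneg hb (abs_nonneg y))]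

private lemma persp (A A' γ γ' s : ℝ) (hγ : 0 < γ) (hγ' : 0 < γ')
    (hs0 : 0 ≤ s) (hs1 : s ≤ 1) :
    (s*A + (1-s)*A')^2 / (2*(s*γ + (1-s)*γ')) ≤ s*(A^2/(2*γ)) + (1-s)*(A'^2/(2*γ')) := by
  have hg : 0 < s*γ + (1-s)*γ' := by rcases le_total γ γ' with h|h <;> nlinarith
  rw [div_le_iff₀ (by positivity)]
  have key : (s*A + (1-s)*A')^2 * (γ*γ') ≤ (s*A^2*γ' + (1-s)*A'^2*γ) * (s*γ + (1-s)*γ') := by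
    nlinarith [sq_nonneg (A*γ' - A'*γ), mul_nonneg hs0 (sub_nonneg.2 hs1)]
  have expand : (s*(A^2/(2*γ)) + (1-s)*(A'^2/(2*γ'))) * (2*(s*γ+(1-s)*γ'))
      = (s*A^2*γ' + (1-s)*A'^2*γ) * (s*γ + (1-s)*γ') / (γ*γ') := by
    field_simp
  rw [expand, le_div_iff₀ (by positivity)]
  linarith [key]


private lemma scalar_bound (nR Γ C γlo A A' x y γ₁ γ₂ : ℝ)
    (hΓ : 0 < Γ) (hC : 0 < C) (hγlo : 0 < γlo) (hn : 0 ≤ nR)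
    (hA : 0 ≤ A) (hA' : 0 ≤ A') (hA2 : A ≤ 2*C) (hA'2 : A' ≤ 2*C)
    (hx : 0 ≤ x) (hAA' : |A - A'| ≤ x)
    (hγ₁ : γlo ≤ γ₁) (hγ₂ : γlo ≤ γ₂) (hy : y = γ₁ - γ₂) :
    y * (Γ^2 * nR / 2) + A^2 / (2*γ₁) - A'^2 / (2*γ₂) ≤
      Real.sqrt (nR^2 * Γ^4 / 4 + 4 * C^2 / γlo^2 + 4 * C^4 / γlo^4) *
        Real.sqrt (x^2 + y^2) := by
  have hγ₁pos : 0 < γ₁ := lt_of_lt_of_le hγlo hγ₁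
  have hγ₂pos : 0 < γ₂ := lt_of_lt_of_le hγlo hγ₂
  set a : ℝ := 2 * C / γlo with hadef
  set b : ℝ := Real.sqrt (nR ^ 2 * Γ ^ 4 / 4 + 4 * C ^ 4 / γlo ^ 4) with hbdef
  have hdecomp : y * (Γ^2 * nR / 2) + A^2 / (2*γ₁) - A'^2 / (2*γ₂) =
      (A^2 - A'^2) / (2*γ₁) + y * (Γ^2 * nR / 2 - A'^2 / (2*(γ₁*γ₂))) := by
    subst hy
    field_simp
    ring
  have hterm1 : (A^2 - A'^2) / (2*γ₁) ≤ a * x := by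
    have h1 : A^2 - A'^2 ≤ 4 * C * x := by
      have h3 : A - A' ≤ x := (abs_le.1 hAA').2
      calc A^2 - A'^2 = (A + A') * (A - A') := by ring
        _ ≤ (A + A') * x := mul_le_mul_of_nonneg_left h3 (by linarith)
        _ ≤ (4 * C) * x := mul_le_mul_of_nonneg_right (by linarith) hx
        _ = 4 * C * x := by ring
    calc (A^2 - A'^2) / (2*γ₁) ≤ (4 * C * x) / (2*γlo) := by
          apply div_le_div₀ (by positivity) h1 (by positivity) (by linarith)
      _ = a * x := by rw [hadef]; field_simp; ring
  have hbnn : 0 ≤ b := Real.sqrt_nonneg _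
  have hterm2 : y * (Γ^2 * nR / 2 - A'^2 / (2*(γ₁*γ₂))) ≤ b * |y| := by
    have hcb : Γ^2 * nR / 2 ≤ b := by
      apply (Real.le_sqrt (by positivity) (by positivity)).2
      have h : (Γ^2 * nR / 2)^2 = nR^2 * Γ^4 / 4 := by ring
      rw [h]
      have : (0:ℝ) ≤ 4 * C^4 / γlo^4 := by positivity
      linarith
    have hQb : A'^2 / (2*(γ₁*γ₂)) ≤ b := by
      have h1 : A'^2 / (2*(γ₁*γ₂)) ≤ 2 * C^2 / γlo^2 := by
        have h2 : A'^2 ≤ 4 * C^2 := by nlinarith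
        have h3 : γlo^2 ≤ γ₁ * γ₂ := by nlinarith
        calc A'^2 / (2*(γ₁*γ₂)) ≤ (4*C^2) / (2*γlo^2) := by
              apply div_le_div₀ (by positivity) h2 (by positivity) (by nlinarith)
          _ = 2 * C^2 / γlo^2 := by field_simp; ring
      have h4 : 2 * C^2 / γlo^2 ≤ b := by
        apply (Real.le_sqrt (by positivity) (by positivity)).2
        have h : (2 * C^2 / γlo^2)^2 = 4 * C^4 / γlo^4 := by field_simp; ring
        rw [h]
        have : (0:ℝ) ≤ nR^2 * Γ^4 / 4 := by positivity
        linarith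
      linarith
    have hQnn : 0 ≤ A'^2 / (2*(γ₁*γ₂)) := by positivity
    have habs : |Γ^2 * nR / 2 - A'^2 / (2*(γ₁*γ₂))| ≤ b := by
      rw [abs_le]
      have hcnn : (0:ℝ) ≤ Γ^2 * nR / 2 := by positivity
      constructor <;> linarith
    calc y * (Γ^2 * nR / 2 - A'^2 / (2*(γ₁*γ₂))) ≤
          |y * (Γ^2 * nR / 2 - A'^2 / (2*(γ₁*γ₂)))| := le_abs_self _
      _ = |y| * |Γ^2 * nR / 2 - A'^2 / (2*(γ₁*γ₂))| := abs_mul _ _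
      _ ≤ |y| * b := mul_le_mul_of_nonneg_left habs (abs_nonneg _)
      _ = b * |y| := mul_comm _ _
  have hanna : (0:ℝ) ≤ a := by positivity
  have hcs := cs2 a b x y hanna hbnn hx
  have hab : Real.sqrt (a^2 + b^2) =
      Real.sqrt (nR^2 * Γ^4 / 4 + 4 * C^2 / γlo^2 + 4 * C^4 / γlo^4) := by
    congr 1
    have hb2 : b^2 = nR ^ 2 * Γ ^ 4 / 4 + 4 * C ^ 4 / γlo ^ 4 :=
      Real.sq_sqrt (by positivity)
    rw [hb2, hadef]
    field_simp
    ring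
  rw [hdecomp]
  calc (A^2 - A'^2) / (2*γ₁) + y * (Γ^2 * nR / 2 - A'^2 / (2*(γ₁*γ₂)))
      ≤ a * x + b * |y| := add_le_add hterm1 hterm2
    _ ≤ Real.sqrt (a^2 + b^2) * Real.sqrt (x^2 + y^2) := hcs
    _ = _ := by rw [hab]

/-- Proposition 2 of the paper: the OGA meta-loss
    L(ϑ,γ) = inf_{‖θ‖≤C} { Σᵢ ℓᵢ(θ) + γΓ²n/2 + ‖θ-ϑ‖²/(2γ) }
    is convex and √(n²Γ⁴/4 + 4C²/γ̲² + 4C⁴/γ̲⁴)-Lipschitz on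
    Λ = {‖ϑ‖ ≤ C} × [γ̲, γ̄]. -/
theorem oga_meta_loss_convex_lipschitz
    (d n : ℕ) (hd : 1 ≤ d) (hn : 1 ≤ n)
    (Γ C γlo γhi : ℝ) (hΓ : 0 < Γ) (hC : 0 < C) (hγlo : 0 < γlo) (hγ : γlo < γhi)
    (ℓ : Fin n → EuclideanSpace ℝ (Fin d) → ℝ)
    (hconv : ∀ i : Fin n, ∀ x y : EuclideanSpace ℝ (Fin d), ∀ s : ℝ, 0 ≤ s → s ≤ 1 →
      ℓ i (s • x + (1 - s) • y) ≤ s * ℓ i x + (1 - s) * ℓ i y)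
    (hlip : ∀ i : Fin n, ∀ x y : EuclideanSpace ℝ (Fin d), |ℓ i x - ℓ i y| ≤ Γ * ‖x - y‖)
    (ML : EuclideanSpace ℝ (Fin d) → ℝ → ℝ)
    (hML : ∀ ϑ : EuclideanSpace ℝ (Fin d), ∀ γ : ℝ,
      ML ϑ γ = sInf {r : ℝ | ∃ θ : EuclideanSpace ℝ (Fin d), ‖θ‖ ≤ C ∧
        r = ∑ i, ℓ i θ + γ * Γ ^ 2 * n / 2 + ‖θ - ϑ‖ ^ 2 / (2 * γ)}) :
    (∀ ϑ ϑ' : EuclideanSpace ℝ (Fin d), ‖ϑ‖ ≤ C → ‖ϑ'‖ ≤ C →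
      ∀ γ γ' : ℝ, γ ∈ Set.Icc γlo γhi → γ' ∈ Set.Icc γlo γhi →
      ∀ s : ℝ, 0 ≤ s → s ≤ 1 →
        ML (s • ϑ + (1 - s) • ϑ') (s * γ + (1 - s) * γ') ≤
          s * ML ϑ γ + (1 - s) * ML ϑ' γ') ∧
    (∀ ϑ ϑ' : EuclideanSpace ℝ (Fin d), ‖ϑ‖ ≤ C → ‖ϑ'‖ ≤ C →
      ∀ γ γ' : ℝ, γ ∈ Set.Icc γlo γhi → γ' ∈ Set.Icc γlo γhi →
        |ML ϑ γ - ML ϑ' γ'| ≤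
          Real.sqrt (n ^ 2 * Γ ^ 4 / 4 + 4 * C ^ 2 / γlo ^ 2 + 4 * C ^ 4 / γlo ^ 4) *
            Real.sqrt (‖ϑ - ϑ'‖ ^ 2 + (γ - γ') ^ 2)) := by
  classical
  set F : EuclideanSpace ℝ (Fin d) → EuclideanSpace ℝ (Fin d) → ℝ → ℝ :=
    fun θ ϑ γ => ∑ i, ℓ i θ + γ * Γ ^ 2 * n / 2 + ‖θ - ϑ‖ ^ 2 / (2 * γ) with hFdef
  set S : EuclideanSpace ℝ (Fin d) → ℝ → Set ℝ := fun ϑ γ => {r | ∃ θ : EuclideanSpace ℝ (Fin d), ‖θ‖ ≤ C ∧ r = F θ ϑ γ} with hSdef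
  have hMLF : ∀ ϑ γ, ML ϑ γ = sInf (S ϑ γ) := hML
  -- nonemptiness
  have hne : ∀ ϑ γ, (S ϑ γ).Nonempty := fun ϑ γ =>
    ⟨F 0 ϑ γ, 0, by simp [hC.le], rfl⟩
  -- sum lipschitz lower bound
  have hsum_lb : ∀ θ : EuclideanSpace ℝ (Fin d), ‖θ‖ ≤ C → (∑ i, ℓ i (0:EuclideanSpace ℝ (Fin d))) - n * Γ * C ≤ ∑ i, ℓ i θ := by
    intro θ hθ
    have h1 : ∀ i : Fin n, ℓ i 0 - Γ * C ≤ ℓ i θ := by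
      intro i
      have := hlip i θ 0
      have h2 : ℓ i 0 - ℓ i θ ≤ Γ * ‖θ - 0‖ := by
        have := abs_le.1 this; linarith [this.1]
      have h3 : ‖θ - (0:EuclideanSpace ℝ (Fin d))‖ ≤ C := by simpa using hθ
      nlinarith [hΓ.le]
    calc (∑ i, ℓ i (0:EuclideanSpace ℝ (Fin d))) - n * Γ * C = ∑ i : Fin n, (ℓ i 0 - Γ * C) := by
          rw [Finset.sum_sub_distrib]; simp [Finset.card_univ]; ring
      _ ≤ ∑ i, ℓ i θ := Finset.sum_le_sum (fun i _ => h1 i)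
  -- bounded below
  have hbdd : ∀ ϑ : EuclideanSpace ℝ (Fin d), ∀ γ : ℝ, γlo ≤ γ → BddBelow (S ϑ γ) := by
    intro ϑ γ hγ1
    have hγpos : 0 < γ := lt_of_lt_of_le hγlo hγ1
    refine ⟨(∑ i, ℓ i (0:EuclideanSpace ℝ (Fin d))) - n * Γ * C, ?_⟩
    rintro r ⟨θ, hθ, rfl⟩
    have h1 := hsum_lb θ hθ
    have h2 : 0 ≤ γ * Γ ^ 2 * n / 2 := by positivity
    have h3 : 0 ≤ ‖θ - ϑ‖ ^ 2 / (2 * γ) := by positivity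
    simp only [hFdef]; linarith
  -- inf ≤ value
  have hle : ∀ ϑ : EuclideanSpace ℝ (Fin d), ∀ γ : ℝ, γlo ≤ γ → ∀ θ : EuclideanSpace ℝ (Fin d), ‖θ‖ ≤ C → ML ϑ γ ≤ F θ ϑ γ := by
    intro ϑ γ hγ1 θ hθ
    rw [hMLF]
    exact csInf_le (hbdd ϑ γ hγ1) ⟨θ, hθ, rfl⟩
  -- approximate minimizer
  have happrox : ∀ ϑ : EuclideanSpace ℝ (Fin d), ∀ γ : ℝ, ∀ ε : ℝ, 0 < ε →
      ∃ θ : EuclideanSpace ℝ (Fin d), ‖θ‖ ≤ C ∧ F θ ϑ γ < ML ϑ γ + ε := by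
    intro ϑ γ ε hε
    have h := exists_lt_of_csInf_lt (hne ϑ γ) (show sInf (S ϑ γ) < ML ϑ γ + ε by
      rw [hMLF]; linarith)
    obtain ⟨r, ⟨θ, hθ, rfl⟩, hr⟩ := h
    exact ⟨θ, hθ, hr⟩
  constructor
  · -- convexity
    intro ϑ ϑ' hϑ hϑ' γ γ' hγm hγ'm s hs0 hs1
    obtain ⟨hγ1, hγ2⟩ := hγm
    obtain ⟨hγ'1, hγ'2⟩ := hγ'm
    have hγpos : 0 < γ := lt_of_lt_of_le hγlo hγ1
    have hγ'pos : 0 < γ' := lt_of_lt_of_le hγlo hγ'1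
    have hgge : γlo ≤ s * γ + (1 - s) * γ' := by nlinarith
    apply le_of_forall_pos_le_add
    intro ε hε
    obtain ⟨θ, hθ, hθF⟩ := happrox ϑ γ (ε/2) (by linarith)
    obtain ⟨θ', hθ', hθ'F⟩ := happrox ϑ' γ' (ε/2) (by linarith)
    set θ'' : EuclideanSpace ℝ (Fin d) := s • θ + (1 - s) • θ' with hθ''def
    have hθ''n : ‖θ''‖ ≤ C := by
      calc ‖θ''‖ ≤ ‖s • θ‖ + ‖(1-s) • θ'‖ := norm_add_le _ _
        _ = s * ‖θ‖ + (1-s) * ‖θ'‖ := by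
            rw [norm_smul, norm_smul, Real.norm_eq_abs, Real.norm_eq_abs,
              abs_of_nonneg hs0, abs_of_nonneg (by linarith)]
        _ ≤ s * C + (1-s) * C :=
            add_le_add (mul_le_mul_of_nonneg_left hθ hs0)
              (mul_le_mul_of_nonneg_left hθ' (by linarith))
        _ = C := by ring
    have hstep : ML (s • ϑ + (1 - s) • ϑ') (s * γ + (1 - s) * γ') ≤
        F θ'' (s • ϑ + (1 - s) • ϑ') (s * γ + (1 - s) * γ') :=
      hle _ _ hgge θ'' hθ''n
    have hFconv : F θ'' (s • ϑ + (1 - s) • ϑ') (s * γ + (1 - s) * γ') ≤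
        s * F θ ϑ γ + (1 - s) * F θ' ϑ' γ' := by
      have hsum : ∑ i, ℓ i θ'' ≤ s * ∑ i, ℓ i θ + (1 - s) * ∑ i, ℓ i θ' := by
        calc ∑ i, ℓ i θ'' ≤ ∑ i : Fin n, (s * ℓ i θ + (1 - s) * ℓ i θ') :=
              Finset.sum_le_sum (fun i _ => hconv i θ θ' s hs0 hs1)
          _ = s * ∑ i, ℓ i θ + (1 - s) * ∑ i, ℓ i θ' := by
              rw [Finset.sum_add_distrib, Finset.mul_sum, Finset.mul_sum]
      have hvec : θ'' - (s • ϑ + (1 - s) • ϑ') = s • (θ - ϑ) + (1 - s) • (θ' - ϑ') := by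
        simp only [hθ''def, smul_sub]; abel
      have hnorm : ‖θ'' - (s • ϑ + (1 - s) • ϑ')‖ ≤ s * ‖θ - ϑ‖ + (1 - s) * ‖θ' - ϑ'‖ := by
        rw [hvec]
        calc ‖s • (θ - ϑ) + (1 - s) • (θ' - ϑ')‖ ≤ ‖s • (θ - ϑ)‖ + ‖(1-s) • (θ' - ϑ')‖ :=
              norm_add_le _ _
          _ = s * ‖θ - ϑ‖ + (1-s) * ‖θ' - ϑ'‖ := by
              rw [norm_smul, norm_smul, Real.norm_eq_abs, Real.norm_eq_abs,
                abs_of_nonneg hs0, abs_of_nonneg (by linarith)]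
      have hquad : ‖θ'' - (s • ϑ + (1 - s) • ϑ')‖ ^ 2 / (2 * (s * γ + (1 - s) * γ')) ≤
          s * (‖θ - ϑ‖ ^ 2 / (2 * γ)) + (1 - s) * (‖θ' - ϑ'‖ ^ 2 / (2 * γ')) := by
        have hg : 0 < s * γ + (1 - s) * γ' := lt_of_lt_of_le hγlo hgge
        have h1 : ‖θ'' - (s • ϑ + (1 - s) • ϑ')‖ ^ 2 ≤
            (s * ‖θ - ϑ‖ + (1 - s) * ‖θ' - ϑ'‖) ^ 2 := by
          apply pow_le_pow_left₀ (norm_nonneg _) hnorm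
        calc ‖θ'' - (s • ϑ + (1 - s) • ϑ')‖ ^ 2 / (2 * (s * γ + (1 - s) * γ')) ≤
            (s * ‖θ - ϑ‖ + (1 - s) * ‖θ' - ϑ'‖) ^ 2 / (2 * (s * γ + (1 - s) * γ')) := by
              gcongr
          _ ≤ _ := persp _ _ _ _ _ hγpos hγ'pos hs0 hs1
      have hlin : (s * γ + (1 - s) * γ') * Γ ^ 2 * n / 2 =
          s * (γ * Γ ^ 2 * n / 2) + (1 - s) * (γ' * Γ ^ 2 * n / 2) := by ring
      simp only [hFdef]
      calc ∑ i, ℓ i θ'' + (s * γ + (1 - s) * γ') * Γ ^ 2 * n / 2 +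
            ‖θ'' - (s • ϑ + (1 - s) • ϑ')‖ ^ 2 / (2 * (s * γ + (1 - s) * γ'))
          ≤ (s * ∑ i, ℓ i θ + (1 - s) * ∑ i, ℓ i θ') +
            (s * (γ * Γ ^ 2 * n / 2) + (1 - s) * (γ' * Γ ^ 2 * n / 2)) +
            (s * (‖θ - ϑ‖ ^ 2 / (2 * γ)) + (1 - s) * (‖θ' - ϑ'‖ ^ 2 / (2 * γ'))) := by
            rw [← hlin]; exact add_le_add (add_le_add hsum le_rfl) hquad
        _ = s * (∑ i, ℓ i θ + γ * Γ ^ 2 * n / 2 + ‖θ - ϑ‖ ^ 2 / (2 * γ)) +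
            (1 - s) * (∑ i, ℓ i θ' + γ' * Γ ^ 2 * n / 2 + ‖θ' - ϑ'‖ ^ 2 / (2 * γ')) := by
            ring
    have h1 : s * F θ ϑ γ ≤ s * (ML ϑ γ + ε/2) :=
      mul_le_mul_of_nonneg_left hθF.le hs0
    have h2 : (1 - s) * F θ' ϑ' γ' ≤ (1 - s) * (ML ϑ' γ' + ε/2) :=
      mul_le_mul_of_nonneg_left hθ'F.le (by linarith)
    calc ML (s • ϑ + (1 - s) • ϑ') (s * γ + (1 - s) * γ')
        ≤ F θ'' (s • ϑ + (1 - s) • ϑ') (s * γ + (1 - s) * γ') := hstep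
      _ ≤ s * F θ ϑ γ + (1 - s) * F θ' ϑ' γ' := hFconv
      _ ≤ s * (ML ϑ γ + ε/2) + (1 - s) * (ML ϑ' γ' + ε/2) := add_le_add h1 h2
      _ = s * ML ϑ γ + (1 - s) * ML ϑ' γ' + (1 - 0) * (ε/2) := by ring
      _ ≤ s * ML ϑ γ + (1 - s) * ML ϑ' γ' + ε := by linarith
  · -- Lipschitz
    intro ϑ ϑ' hϑ hϑ' γ γ' hγm hγ'm
    set K : ℝ := Real.sqrt (n ^ 2 * Γ ^ 4 / 4 + 4 * C ^ 2 / γlo ^ 2 + 4 * C ^ 4 / γlo ^ 4)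
      with hKdef
    -- key pointwise comparison
    have hcomp : ∀ (θ ϑ₁ ϑ₂ : EuclideanSpace ℝ (Fin d)) (γ₁ γ₂ : ℝ), ‖θ‖ ≤ C → ‖ϑ₁‖ ≤ C → ‖ϑ₂‖ ≤ C →
        γ₁ ∈ Set.Icc γlo γhi → γ₂ ∈ Set.Icc γlo γhi →
        F θ ϑ₁ γ₁ ≤ F θ ϑ₂ γ₂ + K * Real.sqrt (‖ϑ₁ - ϑ₂‖ ^ 2 + (γ₁ - γ₂) ^ 2) := by
      intro θ ϑ₁ ϑ₂ γ₁ γ₂ hθ hϑ₁ hϑ₂ hγ₁m hγ₂m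
      have hA2C : ‖θ - ϑ₁‖ ≤ 2 * C := by
        calc ‖θ - ϑ₁‖ ≤ ‖θ‖ + ‖ϑ₁‖ := norm_sub_le _ _
          _ ≤ 2 * C := by linarith
      have hA'2C : ‖θ - ϑ₂‖ ≤ 2 * C := by
        calc ‖θ - ϑ₂‖ ≤ ‖θ‖ + ‖ϑ₂‖ := norm_sub_le _ _
          _ ≤ 2 * C := by linarith
      have hAA' : |‖θ - ϑ₁‖ - ‖θ - ϑ₂‖| ≤ ‖ϑ₁ - ϑ₂‖ := by
        have h : (θ - ϑ₁) - (θ - ϑ₂) = ϑ₂ - ϑ₁ := by abel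
        calc |‖θ - ϑ₁‖ - ‖θ - ϑ₂‖| ≤ ‖(θ - ϑ₁) - (θ - ϑ₂)‖ := abs_norm_sub_norm_le _ _
          _ = ‖ϑ₂ - ϑ₁‖ := by rw [h]
          _ = ‖ϑ₁ - ϑ₂‖ := norm_sub_rev _ _
      have hkey := scalar_bound (n:ℝ) Γ C γlo (‖θ - ϑ₁‖) (‖θ - ϑ₂‖)
        (‖ϑ₁ - ϑ₂‖) (γ₁ - γ₂) γ₁ γ₂ hΓ hC hγlo (Nat.cast_nonneg n)
        (norm_nonneg _) (norm_nonneg _) hA2C hA'2C (norm_nonneg _) hAA' hγ₁m.1 hγ₂m.1 rfl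
      have hdiff : F θ ϑ₁ γ₁ - F θ ϑ₂ γ₂ =
          (γ₁ - γ₂) * (Γ^2 * (n:ℝ) / 2) + ‖θ - ϑ₁‖^2 / (2*γ₁) - ‖θ - ϑ₂‖^2 / (2*γ₂) := by
        simp only [hFdef]
        ring
      rw [hKdef]
      linarith
    -- one-sided bound
    have hone : ∀ (ϑ₁ ϑ₂ : EuclideanSpace ℝ (Fin d)) (γ₁ γ₂ : ℝ), ‖ϑ₁‖ ≤ C → ‖ϑ₂‖ ≤ C →
        γ₁ ∈ Set.Icc γlo γhi → γ₂ ∈ Set.Icc γlo γhi →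
        ML ϑ₁ γ₁ - ML ϑ₂ γ₂ ≤ K * Real.sqrt (‖ϑ₁ - ϑ₂‖ ^ 2 + (γ₁ - γ₂) ^ 2) := by
      intro ϑ₁ ϑ₂ γ₁ γ₂ hϑ₁ hϑ₂ hγ₁m hγ₂m
      rw [sub_le_iff_le_add, add_comm]
      apply le_of_forall_pos_le_add
      intro ε hε
      obtain ⟨θ, hθ, hθF⟩ := happrox ϑ₂ γ₂ ε hε
      have h1 : ML ϑ₁ γ₁ ≤ F θ ϑ₁ γ₁ := hle ϑ₁ γ₁ hγ₁m.1 θ hθ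
      have h2 := hcomp θ ϑ₁ ϑ₂ γ₁ γ₂ hθ hϑ₁ hϑ₂ hγ₁m hγ₂m
      linarith
    rw [abs_sub_le_iff]
    constructor
    · exact hone ϑ ϑ' γ γ' hϑ hϑ' hγm hγ'm
    · have := hone ϑ' ϑ γ' γ hϑ' hϑ hγ'm hγm
      have hsym : Real.sqrt (‖ϑ' - ϑ‖ ^ 2 + (γ' - γ) ^ 2) =
          Real.sqrt (‖ϑ - ϑ'‖ ^ 2 + (γ - γ') ^ 2) := by
        rw [norm_sub_rev]
        congr 1
        ring
      linarith [hsym ▸ this]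
end

section
/- Let d, n, T ≥ 1 be natural numbers, Γ > 0, C > 0, β > 0 with n^{-β} ≤ C². For t = 1,…,T and i = 1,…,n let ℓ_{t,i} : ℝ^d → ℝ be convex and Γ-Lipschitz. Set γ̲ = n^{-β}, γ̄ = C², Λ = {ϑ ∈ ℝ^d : ‖ϑ‖ ≤ C} × [γ̲, γ̄], L = √(n²Γ⁴/4 + 4C²/γ̲² + 4C⁴/γ̲⁴), and α = (C/L)√((4+C²)/T). For each t define the meta-loss L_t(ϑ,γ) = inf_{‖θ‖≤C} { Σ_{i=1}^n ℓ_{t,i}(θ) + γΓ²n/2 + ‖θ-ϑ‖²/(2γ) }. Let λ_1 ∈ Λ and, for t = 1,…,T, let λ_{t+1} ∈ Λ minimize λ ↦ L_t(λ) + ‖λ - λ_t‖²/(2α) over Λ (distance √(‖ϑ-ϑ'‖²+(γ-γ')²)). Suppose s_1,…,s_T ∈ ℝ satisfy s_t ≤ L_t(λ_t) for each t. Then for all θ_1,…,θ_T ∈ ℝ^d with ‖θ_t‖ ≤ C, writing θ̄ = (1/T)Σ_{s=1}^T θ_s and σ = √((1/T)Σ_{t=1}^T ‖θ_t - θ̄‖²):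 Σ_{t=1}^T s_t ≤ Σ_{t=1}^T Σ_{i=1}^n ℓ_{t,i}(θ_t) + C√((n²Γ⁴/4 + 4C² n^{2β} + 4C⁴ n^{4β})(4+C²)T) + Γ²T n^{1-β}/2 + σ T (Γ√n + 1/C). -/
open RealInnerProductSpace in
lemma combo_sq {F : Type*} [NormedAddCommGroup F] [InnerProductSpace ℝ F]
    (x y z : F) (c : ℝ) :
    ‖(c • x + (1 - c) • y) - z‖ ^ 2
      = c * ‖x - z‖ ^ 2 + (1 - c) * ‖y - z‖ ^ 2 - c * (1 - c) * ‖x - y‖ ^ 2 := by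
  have h : (c • x + (1 - c) • y) - z = c • (x - z) + (1 - c) • (y - z) := by
    simp [smul_sub, sub_smul]; abel
  have h6 : x - y = (x - z) - (y - z) := by abel
  rw [h, h6]
  simp only [← real_inner_self_eq_norm_sq, inner_add_add_self, inner_sub_sub_self,
    real_inner_smul_left, real_inner_smul_right, real_inner_comm (y-z) (x-z)]
  ring

open RealInnerProductSpace in
lemma perspective_convex {F : Type*} [NormedAddCommGroup F] [InnerProductSpace ℝ F]
    (x y : F) (γ γ' c : ℝ) (hγ : 0 < γ) (hγ' : 0 < γ') (hc0 : 0 ≤ c) (hc1 : c ≤ 1) :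
    ‖c • x + (1 - c) • y‖ ^ 2 / (c * γ + (1 - c) * γ')
      ≤ c * (‖x‖ ^ 2 / γ) + (1 - c) * (‖y‖ ^ 2 / γ') := by
  have hd : 0 < c * γ + (1 - c) * γ' := by
    rcases le_total γ γ' with h | h <;> nlinarith
  have h5 : (0:ℝ) < γ * γ' := by positivity
  have hrhs : c * (‖x‖ ^ 2 / γ) + (1 - c) * (‖y‖ ^ 2 / γ')
      = (c * ‖x‖^2 * γ' + (1 - c) * ‖y‖^2 * γ) / (γ * γ') := by
    field_simp
  rw [hrhs, div_le_div_iff₀ hd h5]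
  have hx := combo_sq x y 0 c
  simp only [sub_zero] at hx
  rw [hx]
  have h2 : 0 ≤ c * (1-c) * ‖γ' • x - γ • y‖^2 :=
    mul_nonneg (mul_nonneg hc0 (by linarith)) (sq_nonneg _)
  have h3 : ‖γ' • x - γ • y‖^2 = γ'^2 * ‖x‖^2 - 2*(γ*γ')*(inner ℝ x y : ℝ) + γ^2*‖y‖^2 := by
    simp only [← real_inner_self_eq_norm_sq, inner_sub_sub_self, real_inner_smul_left,
      real_inner_smul_right, real_inner_comm y x]
    ring
  have h4 : ‖x - y‖^2 = ‖x‖^2 - 2*(inner ℝ x y : ℝ) + ‖y‖^2 := by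
    simp only [← real_inner_self_eq_norm_sq, inner_sub_sub_self, real_inner_comm y x]
    ring
  rw [h3] at h2
  rw [h4]
  nlinarith [h2]

/-- The set whose infimum defines the meta-loss. -/
def metaSet {F : Type*} [NormedAddCommGroup F] (f : F → ℝ) (C k : ℝ) (ϑ : F) (γ : ℝ) :
    Set ℝ :=
  {r : ℝ | ∃ θ0 : F, ‖θ0‖ ≤ C ∧ r = f θ0 + γ * k + ‖θ0 - ϑ‖ ^ 2 / (2 * γ)}

lemma metaSet_nonempty {F : Type*} [NormedAddCommGroup F] (f : F → ℝ) {C : ℝ} (k : ℝ)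
    (ϑ : F) (γ : ℝ) (hC : 0 ≤ C) : (metaSet f C k ϑ γ).Nonempty :=
  ⟨_, 0, by simpa using hC, rfl⟩

lemma metaSet_bddBelow {F : Type*} [NormedAddCommGroup F] {f : F → ℝ} {C k B γ : ℝ}
    (hB : ∀ θ0 : F, ‖θ0‖ ≤ C → B ≤ f θ0) (hk : 0 ≤ k) (hγ : 0 < γ) (ϑ : F) :
    BddBelow (metaSet f C k ϑ γ) := by
  refine ⟨B, fun r hr => ?_⟩
  obtain ⟨θ0, h1, rfl⟩ := hr
  have h2 := hB θ0 h1
  have h3 : 0 ≤ γ * k := mul_nonneg hγ.le hk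
  have h4 : 0 ≤ ‖θ0 - ϑ‖ ^ 2 / (2 * γ) := by positivity
  linarith

lemma metaInf_le {F : Type*} [NormedAddCommGroup F] {f : F → ℝ} {C k B γ : ℝ}
    (hB : ∀ θ0 : F, ‖θ0‖ ≤ C → B ≤ f θ0) (hk : 0 ≤ k) (hγ : 0 < γ) (ϑ : F)
    (θ0 : F) (hθ0 : ‖θ0‖ ≤ C) :
    sInf (metaSet f C k ϑ γ) ≤ f θ0 + γ * k + ‖θ0 - ϑ‖ ^ 2 / (2 * γ) :=
  csInf_le (metaSet_bddBelow hB hk hγ ϑ) ⟨θ0, hθ0, rfl⟩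

/-- Convexity of the meta-loss. -/
lemma metaInf_convex {F : Type*} [NormedAddCommGroup F] [InnerProductSpace ℝ F]
    {f : F → ℝ} {C k B : ℝ} (hC : 0 < C) (hk : 0 ≤ k)
    (hB : ∀ θ0 : F, ‖θ0‖ ≤ C → B ≤ f θ0)
    (hfconv : ∀ x y : F, ‖x‖ ≤ C → ‖y‖ ≤ C → ∀ c : ℝ, 0 ≤ c → c ≤ 1 →
      f (c • x + (1 - c) • y) ≤ c * f x + (1 - c) * f y)
    (ϑ ϑ' : F) {γ γ' : ℝ} (hγ : 0 < γ) (hγ' : 0 < γ') {c : ℝ} (hc0 : 0 ≤ c) (hc1 : c ≤ 1) :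
    sInf (metaSet f C k (c • ϑ + (1 - c) • ϑ') (c * γ + (1 - c) * γ'))
      ≤ c * sInf (metaSet f C k ϑ γ) + (1 - c) * sInf (metaSet f C k ϑ' γ') := by
  have hd : 0 < c * γ + (1 - c) * γ' := by
    rcases le_total γ γ' with h | h <;> nlinarith
  have key : ∀ r ∈ metaSet f C k ϑ γ, ∀ r' ∈ metaSet f C k ϑ' γ',
      sInf (metaSet f C k (c • ϑ + (1 - c) • ϑ') (c * γ + (1 - c) * γ'))
        ≤ c * r + (1 - c) * r' := by
    rintro r ⟨θ0, hθ0, rfl⟩ r' ⟨θ0', hθ0', rfl⟩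
    have hθc : ‖c • θ0 + (1 - c) • θ0'‖ ≤ C := by
      calc ‖c • θ0 + (1 - c) • θ0'‖ ≤ ‖c • θ0‖ + ‖(1 - c) • θ0'‖ := norm_add_le _ _
        _ = c * ‖θ0‖ + (1 - c) * ‖θ0'‖ := by
            rw [norm_smul, norm_smul, Real.norm_eq_abs, Real.norm_eq_abs,
              abs_of_nonneg hc0, abs_of_nonneg (by linarith : (0:ℝ) ≤ 1 - c)]
        _ ≤ c * C + (1 - c) * C := by
            have g1 := mul_nonneg hc0 (sub_nonneg.2 hθ0)
            have g2 := mul_nonneg (by linarith : (0:ℝ) ≤ 1 - c) (sub_nonneg.2 hθ0')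
            nlinarith
        _ = C := by ring
    have h1 := metaInf_le hB hk hd (c • ϑ + (1 - c) • ϑ') (c • θ0 + (1 - c) • θ0') hθc
    refine h1.trans ?_
    have h2 := hfconv θ0 θ0' hθ0 hθ0' c hc0 hc1
    have h3 : (c • θ0 + (1 - c) • θ0') - (c • ϑ + (1 - c) • ϑ')
        = c • (θ0 - ϑ) + (1 - c) • (θ0' - ϑ') := by
      simp [smul_sub]; abel
    have h4 := perspective_convex (θ0 - ϑ) (θ0' - ϑ') (2*γ) (2*γ') c
      (by linarith) (by linarith) hc0 hc1
    have h5 : c * (2*γ) + (1-c) * (2*γ') = 2 * (c * γ + (1 - c) * γ') := by ring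
    rw [h5] at h4
    rw [h3]
    nlinarith [h4]
  rcases eq_or_lt_of_le hc0 with hc0' | hc0'
  · subst hc0'
    simp only [zero_smul, zero_mul, zero_add, sub_zero, one_smul, one_mul, le_refl]
  rcases eq_or_lt_of_le hc1 with hc1' | hc1'
  · subst hc1'
    simp only [sub_self, zero_smul, zero_mul, add_zero, one_smul, one_mul, le_refl]
  · have hc1'' : 0 < 1 - c := by linarith
    have hSne := metaSet_nonempty f k ϑ γ hC.le (C := C)
    have hSne' := metaSet_nonempty f k ϑ' γ' hC.le (C := C)
    set A := sInf (metaSet f C k (c • ϑ + (1 - c) • ϑ') (c * γ + (1 - c) * γ')) with hA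
    have h1 : ∀ r' ∈ metaSet f C k ϑ' γ',
        A ≤ c * sInf (metaSet f C k ϑ γ) + (1 - c) * r' := by
      intro r' hr'
      have h2 : (A - (1 - c) * r') / c ≤ sInf (metaSet f C k ϑ γ) := by
        refine le_csInf hSne fun r hr => ?_
        rw [div_le_iff₀ hc0']
        have := key r hr r' hr'
        linarith
      rw [div_le_iff₀ hc0'] at h2
      linarith
    have h2 : (A - c * sInf (metaSet f C k ϑ γ)) / (1 - c)
        ≤ sInf (metaSet f C k ϑ' γ') := by
      refine le_csInf hSne' fun r' hr' => ?_
      rw [div_le_iff₀ hc1'']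
      have := h1 r' hr'
      linarith
    rw [div_le_iff₀ hc1''] at h2
    linarith

/-- One-sided Lipschitz estimate for the meta-loss. -/
lemma metaInf_lip {F : Type*} [NormedAddCommGroup F]
    {f : F → ℝ} {C k B γlo : ℝ} (hC : 0 < C) (hk : 0 ≤ k) (hγlo : 0 < γlo)
    (hB : ∀ θ0 : F, ‖θ0‖ ≤ C → B ≤ f θ0)
    {ϑ ϑ' : F} {γ γ' : ℝ} (hϑ : ‖ϑ‖ ≤ C) (hϑ' : ‖ϑ'‖ ≤ C)
    (hγ : γlo ≤ γ) (hγ' : γlo ≤ γ') :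
    sInf (metaSet f C k ϑ γ) ≤ sInf (metaSet f C k ϑ' γ')
      + (2 * C / γlo) * ‖ϑ - ϑ'‖ + max k (2 * C ^ 2 / γlo ^ 2) * |γ - γ'| := by
  have hγ0 : 0 < γ := lt_of_lt_of_le hγlo hγ
  have hγ0' : 0 < γ' := lt_of_lt_of_le hγlo hγ'
  set bd := (2 * C / γlo) * ‖ϑ - ϑ'‖ + max k (2 * C ^ 2 / γlo ^ 2) * |γ - γ'| with hbd
  have step : ∀ r' ∈ metaSet f C k ϑ' γ', sInf (metaSet f C k ϑ γ) ≤ r' + bd := by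
    rintro r' ⟨θ0, hθ0, rfl⟩
    have h1 := metaInf_le hB hk hγ0 ϑ θ0 hθ0
    refine h1.trans ?_
    have ha : ‖θ0 - ϑ‖ ≤ 2 * C := by
      calc ‖θ0 - ϑ‖ ≤ ‖θ0‖ + ‖ϑ‖ := norm_sub_le _ _
        _ ≤ 2 * C := by linarith
    have hb : ‖θ0 - ϑ'‖ ≤ 2 * C := by
      calc ‖θ0 - ϑ'‖ ≤ ‖θ0‖ + ‖ϑ'‖ := norm_sub_le _ _
        _ ≤ 2 * C := by linarith
    have htri : ‖θ0 - ϑ‖ ≤ ‖θ0 - ϑ'‖ + ‖ϑ - ϑ'‖ := by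
      have h : θ0 - ϑ = (θ0 - ϑ') + (ϑ' - ϑ) := by abel
      rw [h]
      have h2 := norm_add_le (θ0 - ϑ') (ϑ' - ϑ)
      rwa [norm_sub_rev ϑ' ϑ] at h2
    have hnum : ‖θ0 - ϑ‖ ^ 2 - ‖θ0 - ϑ'‖ ^ 2 ≤ 4 * C * ‖ϑ - ϑ'‖ := by
      nlinarith [norm_nonneg (θ0 - ϑ), norm_nonneg (θ0 - ϑ'), norm_nonneg (ϑ - ϑ')]
    have hstep1 : ‖θ0 - ϑ‖ ^ 2 / (2 * γ) - ‖θ0 - ϑ'‖ ^ 2 / (2 * γ)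
        ≤ (2 * C / γlo) * ‖ϑ - ϑ'‖ := by
      rw [div_sub_div_same]
      rcases le_or_gt (‖θ0 - ϑ‖ ^ 2 - ‖θ0 - ϑ'‖ ^ 2) 0 with h | h
      · have h2 : (0:ℝ) ≤ (2 * C / γlo) * ‖ϑ - ϑ'‖ := by positivity
        have h3 : (‖θ0 - ϑ‖ ^ 2 - ‖θ0 - ϑ'‖ ^ 2) / (2 * γ) ≤ 0 :=
          div_nonpos_of_nonpos_of_nonneg h (by linarith)
        linarith
      · calc (‖θ0 - ϑ‖ ^ 2 - ‖θ0 - ϑ'‖ ^ 2) / (2 * γ)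
            ≤ (4 * C * ‖ϑ - ϑ'‖) / (2 * γlo) := by
              apply div_le_div₀ (by positivity) hnum (by linarith) (by linarith)
          _ = (2 * C / γlo) * ‖ϑ - ϑ'‖ := by field_simp; ring
    have hq0 : 0 ≤ ‖θ0 - ϑ'‖ ^ 2 / (2 * γ * γ') := by positivity
    have hqub : ‖θ0 - ϑ'‖ ^ 2 / (2 * γ * γ') ≤ 2 * C ^ 2 / γlo ^ 2 := by
      calc ‖θ0 - ϑ'‖ ^ 2 / (2 * γ * γ') ≤ (2*C)^2 / (2 * γlo * γlo) := by
            apply div_le_div₀ (by positivity) (by nlinarith [norm_nonneg (θ0 - ϑ')])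
              (by positivity) (by nlinarith)
        _ = 2 * C ^ 2 / γlo ^ 2 := by field_simp
    have hfact : ‖θ0 - ϑ'‖ ^ 2 / (2 * γ) - ‖θ0 - ϑ'‖ ^ 2 / (2 * γ') + (γ - γ') * k
        = (γ - γ') * (k - ‖θ0 - ϑ'‖ ^ 2 / (2 * γ * γ')) := by
      field_simp
      ring
    have habs : |k - ‖θ0 - ϑ'‖ ^ 2 / (2 * γ * γ')| ≤ max k (2 * C ^ 2 / γlo ^ 2) := by
      rw [abs_le]
      constructor
      · have := le_max_right k (2 * C ^ 2 / γlo ^ 2); linarith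
      · have := le_max_left k (2 * C ^ 2 / γlo ^ 2); linarith
    have hstep2 : ‖θ0 - ϑ'‖ ^ 2 / (2 * γ) - ‖θ0 - ϑ'‖ ^ 2 / (2 * γ') + (γ - γ') * k
        ≤ max k (2 * C ^ 2 / γlo ^ 2) * |γ - γ'| := by
      rw [hfact]
      calc (γ - γ') * (k - ‖θ0 - ϑ'‖ ^ 2 / (2 * γ * γ'))
          ≤ |(γ - γ') * (k - ‖θ0 - ϑ'‖ ^ 2 / (2 * γ * γ'))| := le_abs_self _
        _ = |γ - γ'| * |k - ‖θ0 - ϑ'‖ ^ 2 / (2 * γ * γ')| := abs_mul _ _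
        _ ≤ |γ - γ'| * max k (2 * C ^ 2 / γlo ^ 2) :=
            mul_le_mul_of_nonneg_left habs (abs_nonneg _)
        _ = max k (2 * C ^ 2 / γlo ^ 2) * |γ - γ'| := mul_comm _ _
    rw [hbd]
    linarith
  have hne' := metaSet_nonempty f k ϑ' γ' hC.le (C := C)
  have h2 : sInf (metaSet f C k ϑ γ) - bd ≤ sInf (metaSet f C k ϑ' γ') :=
    le_csInf hne' fun r' hr' => by linarith [step r' hr']
  rw [hbd] at h2
  linarith

lemma cs2_s8 (b m u v : ℝ) (hb : 0 ≤ b) (hm : 0 ≤ m) (hu : 0 ≤ u) (hv : 0 ≤ v) :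
    b * u + m * v ≤ Real.sqrt (b ^ 2 + m ^ 2) * Real.sqrt (u ^ 2 + v ^ 2) := by
  have h1 : (b * u + m * v) ^ 2 ≤ (b ^ 2 + m ^ 2) * (u ^ 2 + v ^ 2) := by
    nlinarith [sq_nonneg (b * v - m * u)]
  have h2 := Real.sqrt_le_sqrt h1
  rwa [Real.sqrt_sq (by positivity), Real.sqrt_mul (by positivity)] at h2

lemma limit_helper (A B K : ℝ) (hK : 0 ≤ K)
    (h : ∀ τ : ℝ, 0 < τ → τ ≤ 1 / 2 → A + (1 - τ) * K ≤ B) : A + K ≤ B := by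
  by_contra hc
  push_neg at hc
  rcases eq_or_lt_of_le hK with h0 | h0
  · have := h (1/2) (by norm_num) le_rfl
    rw [← h0] at hc this
    linarith
  · set τ := min (1/2) ((A + K - B) / (2 * K)) with hτ
    have hτ0 : 0 < τ := lt_min (by norm_num) (div_pos (by linarith) (by linarith))
    have hτ1 : τ ≤ 1/2 := min_le_left _ _
    have h2 := h τ hτ0 hτ1
    have h3 : τ * K ≤ (A + K - B) / 2 := by
      calc τ * K ≤ ((A + K - B) / (2 * K)) * K :=
            mul_le_mul_of_nonneg_right (min_le_right _ _) hK
        _ = (A + K - B) / 2 := by field_simp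
    nlinarith

lemma sc_combine (mlp mls mlτ qp qs qt τ : ℝ) (hτ0 : 0 < τ)
    (hcomb : mlp + qp ≤ mlτ + (τ * qt + (1 - τ) * qp - τ * (1 - τ) * qs))
    (hconv : mlτ ≤ τ * mls + (1 - τ) * mlp) :
    mlp + qp + (1 - τ) * qs ≤ mls + qt := by
  by_contra hcon
  push_neg at hcon
  have h1 : 0 < τ * (mlp + qp + (1 - τ) * qs - (mls + qt)) := mul_pos hτ0 (by linarith)
  nlinarith

lemma amgm (Lc a q : ℝ) (hL : 0 ≤ Lc) (ha : 0 < a) (hq : 0 ≤ q) :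
    Lc * Real.sqrt q ≤ a * Lc ^ 2 / 2 + q / (2 * a) := by
  have hu := Real.sq_sqrt hq
  have hu0 := Real.sqrt_nonneg q
  set u := Real.sqrt q
  have e : a * Lc ^ 2 / 2 + q / (2 * a) = (a ^ 2 * Lc ^ 2 + q) / (2 * a) := by
    field_simp
  rw [e, ← hu, le_div_iff₀ (by positivity)]
  nlinarith [sq_nonneg (u - a * Lc)]

lemma final_arith (Γ C γlo γhi σv rn Tr nr : ℝ)
    (hΓ : 0 < Γ) (hC : 0 < C) (hγlo0 : 0 < γlo) (hγhi : γhi = C ^ 2) (hlohi : γlo ≤ γhi)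
    (hT0 : 0 < Tr) (hrn0 : 0 < rn) (hrnsq : rn ^ 2 = nr)
    (hσ0 : 0 ≤ σv) (hσ2C : σv ≤ 2 * C) :
    Tr * ((max γlo (min γhi (σv / (Γ * rn)))) * (Γ ^ 2 * nr / 2))
      + σv ^ 2 * Tr / (2 * (max γlo (min γhi (σv / (Γ * rn)))))
    ≤ Γ ^ 2 * Tr * (γlo * nr) / 2 + σv * Tr * (Γ * rn) + σv * Tr / C := by
  have hΓrn : 0 < Γ * rn := by positivity
  have hnn1 : 0 ≤ σv * Tr / C := by positivity
  have hnn2 : 0 ≤ σv * Tr * (Γ * rn) := by positivity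
  rcases le_total (σv / (Γ * rn)) γlo with h1 | h1
  · rw [min_eq_right (h1.trans hlohi), max_eq_left h1]
    have h2 : σv ≤ γlo * (Γ * rn) := by rwa [div_le_iff₀ hΓrn] at h1
    have h3 : σv ^ 2 * Tr / (2 * γlo) ≤ σv * (Γ * rn) * Tr / 2 := by
      rw [div_le_div_iff₀ (by positivity) (by norm_num)]
      nlinarith [mul_le_mul_of_nonneg_left h2 (mul_nonneg hσ0 hT0.le)]
    nlinarith [hrnsq]
  rcases le_total (σv / (Γ * rn)) γhi with h2 | h2
  · rw [min_eq_right h2, max_eq_right h1]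
    have h3 : γlo * (Γ * rn) ≤ σv := by rwa [le_div_iff₀ hΓrn] at h1
    have hσpos : 0 < σv := lt_of_lt_of_le (by positivity) h3
    have e1 : Tr * ((σv / (Γ * rn)) * (Γ ^ 2 * nr / 2)) = σv * Γ * rn * Tr / 2 := by
      rw [← hrnsq]
      field_simp
    have e2 : σv ^ 2 * Tr / (2 * (σv / (Γ * rn))) = σv * Γ * rn * Tr / 2 := by
      field_simp
    rw [e1, e2]
    have h5 : 0 ≤ Γ ^ 2 * Tr * (γlo * nr) / 2 := by
      have : 0 ≤ nr := by rw [← hrnsq]; positivity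
      positivity
    nlinarith
  · rw [min_eq_left h2, max_eq_right hlohi]
    have h3 : γhi * (Γ * rn) ≤ σv := by rwa [le_div_iff₀ hΓrn] at h2
    rw [hγhi] at h3 ⊢
    have h5 : 0 ≤ Γ ^ 2 * Tr * (γlo * nr) / 2 := by
      have : 0 ≤ nr := by rw [← hrnsq]; positivity
      positivity
    have h6 : Tr * (C ^ 2 * (Γ ^ 2 * nr / 2)) ≤ σv * Tr * (Γ * rn) / 2 := by
      have e3 : Tr * (C ^ 2 * (Γ ^ 2 * nr / 2))
          = (C ^ 2 * (Γ * rn)) * (Γ * rn) * Tr / 2 := by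
        rw [← hrnsq]; ring
      rw [e3]
      nlinarith [mul_le_mul_of_nonneg_left h3 (mul_nonneg hΓrn.le hT0.le)]
    have h7 : σv ^ 2 * Tr / (2 * C ^ 2) ≤ σv * Tr / C := by
      rw [div_le_div_iff₀ (by positivity) hC]
      nlinarith [mul_nonneg (mul_nonneg hσ0 hT0.le) hC.le]
    nlinarith

lemma combo_norm_le {F : Type*} [NormedAddCommGroup F] [NormedSpace ℝ F]
    (x y : F) {C c : ℝ} (hx : ‖x‖ ≤ C) (hy : ‖y‖ ≤ C) (hc0 : 0 ≤ c) (hc1 : c ≤ 1) :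
    ‖c • x + (1 - c) • y‖ ≤ C := by
  calc ‖c • x + (1 - c) • y‖ ≤ ‖c • x‖ + ‖(1 - c) • y‖ := norm_add_le _ _
    _ = c * ‖x‖ + (1 - c) * ‖y‖ := by
        rw [norm_smul, norm_smul, Real.norm_eq_abs, Real.norm_eq_abs,
          abs_of_nonneg hc0, abs_of_nonneg (by linarith : (0:ℝ) ≤ 1 - c)]
    _ ≤ C := by
        have g1 := mul_nonneg hc0 (sub_nonneg.2 hx)
        have g2 := mul_nonneg (by linarith : (0:ℝ) ≤ 1 - c) (sub_nonneg.2 hy)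
        nlinarith
set_option maxHeartbeats 8000000 in
/-- Theorem 1 of the paper: meta-regret bound for OPMS applied to learning the
    initialization and step size of projected online gradient descent. -/
theorem oga_meta_learning_regret
    (d n T : ℕ) (hd : 1 ≤ d) (hn : 1 ≤ n) (hT : 1 ≤ T)
    (Γ C β : ℝ) (hΓ : 0 < Γ) (hC : 0 < C) (hβ : 0 < β)
    (hβC : (n : ℝ) ^ (-β) ≤ C ^ 2)
    (ℓ : ℕ → ℕ → EuclideanSpace ℝ (Fin d) → ℝ)
    (hconv : ∀ t ∈ Finset.Icc 1 T, ∀ i ∈ Finset.Icc 1 n,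
      ∀ x y : EuclideanSpace ℝ (Fin d), ∀ c : ℝ, 0 ≤ c → c ≤ 1 →
        ℓ t i (c • x + (1 - c) • y) ≤ c * ℓ t i x + (1 - c) * ℓ t i y)
    (hlip : ∀ t ∈ Finset.Icc 1 T, ∀ i ∈ Finset.Icc 1 n,
      ∀ x y : EuclideanSpace ℝ (Fin d), |ℓ t i x - ℓ t i y| ≤ Γ * ‖x - y‖)
    (γlo γhi L α : ℝ)
    (hγlo : γlo = (n : ℝ) ^ (-β)) (hγhi : γhi = C ^ 2)
    (hLdef : L = Real.sqrt ((n : ℝ) ^ 2 * Γ ^ 4 / 4 + 4 * C ^ 2 / γlo ^ 2 +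
      4 * C ^ 4 / γlo ^ 4))
    (hαdef : α = (C / L) * Real.sqrt ((4 + C ^ 2) / T))
    (ML : ℕ → EuclideanSpace ℝ (Fin d) → ℝ → ℝ)
    (hML : ∀ t ∈ Finset.Icc 1 T, ∀ ϑ : EuclideanSpace ℝ (Fin d), ∀ γ : ℝ,
      ML t ϑ γ = sInf {r : ℝ | ∃ θ : EuclideanSpace ℝ (Fin d), ‖θ‖ ≤ C ∧
        r = ∑ i ∈ Finset.Icc 1 n, ℓ t i θ + γ * Γ ^ 2 * n / 2 + ‖θ - ϑ‖ ^ 2 / (2 * γ)})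
    (lam : ℕ → EuclideanSpace ℝ (Fin d) × ℝ)
    (hlam1 : ‖(lam 1).1‖ ≤ C ∧ (lam 1).2 ∈ Set.Icc γlo γhi)
    (hmem : ∀ t ∈ Finset.Icc 1 T,
      ‖(lam (t + 1)).1‖ ≤ C ∧ (lam (t + 1)).2 ∈ Set.Icc γlo γhi)
    (hmin : ∀ t ∈ Finset.Icc 1 T, ∀ ϑ : EuclideanSpace ℝ (Fin d), ‖ϑ‖ ≤ C →
      ∀ γ ∈ Set.Icc γlo γhi,
      ML t (lam (t + 1)).1 (lam (t + 1)).2 +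
        (‖(lam (t + 1)).1 - (lam t).1‖ ^ 2 + ((lam (t + 1)).2 - (lam t).2) ^ 2) / (2 * α)
      ≤ ML t ϑ γ + (‖ϑ - (lam t).1‖ ^ 2 + (γ - (lam t).2) ^ 2) / (2 * α))
    (s : ℕ → ℝ) (hs : ∀ t ∈ Finset.Icc 1 T, s t ≤ ML t (lam t).1 (lam t).2) :
    ∀ θ : ℕ → EuclideanSpace ℝ (Fin d), (∀ t ∈ Finset.Icc 1 T, ‖θ t‖ ≤ C) →
      ∑ t ∈ Finset.Icc 1 T, s t ≤
        ∑ t ∈ Finset.Icc 1 T, ∑ i ∈ Finset.Icc 1 n, ℓ t i (θ t)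
        + C * Real.sqrt (((n : ℝ) ^ 2 * Γ ^ 4 / 4 + 4 * C ^ 2 * (n : ℝ) ^ (2 * β) +
            4 * C ^ 4 * (n : ℝ) ^ (4 * β)) * (4 + C ^ 2) * T)
        + Γ ^ 2 * T * (n : ℝ) ^ (1 - β) / 2
        + Real.sqrt ((1 / (T : ℝ)) * ∑ t ∈ Finset.Icc 1 T,
            ‖θ t - (1 / (T : ℝ)) • ∑ u ∈ Finset.Icc 1 T, θ u‖ ^ 2) * T *
          (Γ * Real.sqrt n + 1 / C) := by
  intro θ hθ
  -- basic positivity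
  have hn1 : (1:ℝ) ≤ (n:ℝ) := by exact_mod_cast hn
  have hT1 : (1:ℝ) ≤ (T:ℝ) := by exact_mod_cast hT
  have hn0 : (0:ℝ) < (n:ℝ) := by linarith
  have hT0 : (0:ℝ) < (T:ℝ) := by linarith
  have hγlo0 : 0 < γlo := by rw [hγlo]; exact Real.rpow_pos_of_pos hn0 _
  have hγhi0 : 0 < γhi := by rw [hγhi]; positivity
  have hlohi : γlo ≤ γhi := by rw [hγlo, hγhi]; exact hβC
  have hL0 : 0 < L := by
    rw [hLdef]
    apply Real.sqrt_pos.2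
    have : 0 < 4 * C ^ 2 / γlo ^ 2 := by positivity
    have h2 : 0 ≤ (n:ℝ) ^ 2 * Γ ^ 4 / 4 := by positivity
    have h3 : 0 ≤ 4 * C ^ 4 / γlo ^ 4 := by positivity
    linarith
  have hα0 : 0 < α := by
    rw [hαdef]
    have h1 : 0 < (4 + C ^ 2) / (T:ℝ) := by positivity
    have := Real.sqrt_pos.2 h1
    positivity
  set k : ℝ := Γ ^ 2 * (n:ℝ) / 2 with hkdef
  have hk0 : 0 ≤ k := by positivity
  set f : ℕ → EuclideanSpace ℝ (Fin d) → ℝ :=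
    fun t θ0 => ∑ i ∈ Finset.Icc 1 n, ℓ t i θ0 with hfdef
  -- ML equals the metaSet infimum
  have hMLset : ∀ t ∈ Finset.Icc 1 T, ∀ (ϑ : EuclideanSpace ℝ (Fin d)) (γ : ℝ),
      ML t ϑ γ = sInf (metaSet (f t) C k ϑ γ) := by
    intro t ht ϑ γ
    rw [hML t ht ϑ γ]
    congr 1
    ext r
    simp only [metaSet, Set.mem_setOf_eq, hfdef, hkdef]
    constructor <;> rintro ⟨θ0, h1, h2⟩ <;> exact ⟨θ0, h1, by rw [h2]; ring⟩
  -- lower bound for f on the ball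
  have hfB : ∀ t ∈ Finset.Icc 1 T, ∀ θ0 : EuclideanSpace ℝ (Fin d), ‖θ0‖ ≤ C →
      f t 0 - (n:ℝ) * (Γ * C) ≤ f t θ0 := by
    intro t ht θ0 hθ0
    have h1 : ∀ i ∈ Finset.Icc 1 n, ℓ t i 0 - Γ * C ≤ ℓ t i θ0 := by
      intro i hi
      have h := hlip t ht i hi 0 θ0
      rw [abs_le] at h
      have h2 : ‖(0 : EuclideanSpace ℝ (Fin d)) - θ0‖ = ‖θ0‖ := by
        rw [zero_sub, norm_neg]
      rw [h2] at h
      have h3 : Γ * ‖θ0‖ ≤ Γ * C := mul_le_mul_of_nonneg_left hθ0 hΓ.le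
      linarith [h.1]
    have hsum := Finset.sum_le_sum h1
    have hcard : (Finset.Icc 1 n).card = n := by rw [Nat.card_Icc]; omega
    rw [Finset.sum_sub_distrib, Finset.sum_const, hcard, nsmul_eq_mul] at hsum
    simp only [hfdef]
    linarith
  -- convexity of f on the ball
  have hfconv : ∀ t ∈ Finset.Icc 1 T, ∀ x y : EuclideanSpace ℝ (Fin d),
      ‖x‖ ≤ C → ‖y‖ ≤ C → ∀ c : ℝ, 0 ≤ c → c ≤ 1 →
      f t (c • x + (1 - c) • y) ≤ c * f t x + (1 - c) * f t y := by
    intro t ht x y hx hy c hc0 hc1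
    have h1 := Finset.sum_le_sum (fun i hi => hconv t ht i hi x y c hc0 hc1)
    simp only [hfdef, Finset.sum_add_distrib, ← Finset.mul_sum] at h1 ⊢
    exact h1
  -- all iterates stay in Λ
  have hlamΛ : ∀ t ∈ Finset.Icc 1 T, ‖(lam t).1‖ ≤ C ∧ (lam t).2 ∈ Set.Icc γlo γhi := by
    intro t ht
    simp only [Finset.mem_Icc] at ht
    match t, ht with
    | 1, _ => exact hlam1
    | (u+2), h =>
      exact hmem (u+1) (Finset.mem_Icc.2 ⟨by omega, by omega⟩)
  -- the comparator
  set ϑs : EuclideanSpace ℝ (Fin d) := (1 / (T : ℝ)) • ∑ u ∈ Finset.Icc 1 T, θ u with hϑs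
  set S : ℝ := ∑ t ∈ Finset.Icc 1 T, ‖θ t - ϑs‖ ^ 2 with hSdef
  set σv : ℝ := Real.sqrt ((1 / (T : ℝ)) * S) with hσv
  have hϑsC : ‖ϑs‖ ≤ C := by
    rw [hϑs, norm_smul]
    have h1 : ‖∑ u ∈ Finset.Icc 1 T, θ u‖ ≤ ∑ u ∈ Finset.Icc 1 T, ‖θ u‖ :=
      norm_sum_le _ _
    have h2 : ∑ u ∈ Finset.Icc 1 T, ‖θ u‖ ≤ (T:ℝ) * C := by
      have h3 := Finset.sum_le_sum hθ
      rw [Finset.sum_const, Nat.card_Icc, nsmul_eq_mul] at h3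
      have : ((T + 1 - 1 : ℕ) : ℝ) = (T:ℝ) := by norm_num
      rw [this] at h3
      exact h3
    have h4 : ‖(1 / (T:ℝ))‖ = 1 / (T:ℝ) := by
      rw [Real.norm_eq_abs, abs_of_nonneg (by positivity)]
    rw [h4]
    calc (1 / (T:ℝ)) * ‖∑ u ∈ Finset.Icc 1 T, θ u‖ ≤ (1 / (T:ℝ)) * ((T:ℝ) * C) := by
          apply mul_le_mul_of_nonneg_left (h1.trans h2) (by positivity)
      _ = C := by field_simp
  have hS0 : 0 ≤ S := Finset.sum_nonneg fun t _ => sq_nonneg _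
  have hσ0 : 0 ≤ σv := Real.sqrt_nonneg _
  have hσsq : σv ^ 2 = (1 / (T:ℝ)) * S := Real.sq_sqrt (by positivity)
  have hσ2C : σv ≤ 2 * C := by
    have h1 : S ≤ (T:ℝ) * (2 * C) ^ 2 := by
      have h2 : ∀ t ∈ Finset.Icc 1 T, ‖θ t - ϑs‖ ^ 2 ≤ (2 * C) ^ 2 := by
        intro t ht
        have h3 : ‖θ t - ϑs‖ ≤ 2 * C := by
          calc ‖θ t - ϑs‖ ≤ ‖θ t‖ + ‖ϑs‖ := norm_sub_le _ _
            _ ≤ 2 * C := by linarith [hθ t ht]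
        nlinarith [norm_nonneg (θ t - ϑs)]
      have h4 := Finset.sum_le_sum h2
      rw [Finset.sum_const, Nat.card_Icc, nsmul_eq_mul] at h4
      have h5 : ((T + 1 - 1 : ℕ) : ℝ) = (T:ℝ) := by norm_num
      rw [h5] at h4
      exact h4
    have h6 : (1 / (T:ℝ)) * S ≤ (2 * C) ^ 2 := by
      rw [div_mul_eq_mul_div, one_mul, div_le_iff₀ hT0]
      nlinarith
    calc σv ≤ Real.sqrt ((2 * C) ^ 2) := Real.sqrt_le_sqrt h6
      _ = 2 * C := Real.sqrt_sq (by positivity)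
  set rn : ℝ := Real.sqrt (n:ℝ) with hrn
  have hrnsq : rn ^ 2 = (n:ℝ) := Real.sq_sqrt hn0.le
  have hrn0 : 0 < rn := Real.sqrt_pos.2 hn0
  set γs : ℝ := max γlo (min γhi (σv / (Γ * rn))) with hγs
  have hγs_lo : γlo ≤ γs := le_max_left _ _
  have hγs_hi : γs ≤ γhi := max_le hlohi (min_le_left _ _)
  have hγs0 : 0 < γs := lt_of_lt_of_le hγlo0 hγs_lo
  -- the strong-convexity optimality inequality for the proximal step
  have hsc : ∀ t ∈ Finset.Icc 1 T,
      ML t (lam (t+1)).1 (lam (t+1)).2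
        + (‖(lam (t+1)).1 - (lam t).1‖ ^ 2 + ((lam (t+1)).2 - (lam t).2) ^ 2) / (2 * α)
        + (‖ϑs - (lam (t+1)).1‖ ^ 2 + (γs - (lam (t+1)).2) ^ 2) / (2 * α)
      ≤ ML t ϑs γs
        + (‖ϑs - (lam t).1‖ ^ 2 + (γs - (lam t).2) ^ 2) / (2 * α) := by
    intro t ht
    have hm2 := hmem t ht
    apply limit_helper
    · exact div_nonneg (by positivity) (by linarith)
    intro τ hτ0 hτ1
    have hτ1' : τ ≤ 1 := by linarith
    have hcc : ‖τ • ϑs + (1 - τ) • (lam (t+1)).1‖ ≤ C :=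
      combo_norm_le _ _ hϑsC hm2.1 hτ0.le hτ1'
    have hγτ : τ * γs + (1 - τ) * (lam (t+1)).2 ∈ Set.Icc γlo γhi := by
      constructor
      · nlinarith [hm2.2.1, hγs_lo]
      · nlinarith [hm2.2.2, hγs_hi]
    have hcomb := hmin t ht _ hcc _ hγτ
    have hconvML : ML t (τ • ϑs + (1 - τ) • (lam (t+1)).1)
          (τ * γs + (1 - τ) * (lam (t+1)).2)
        ≤ τ * ML t ϑs γs + (1 - τ) * ML t (lam (t+1)).1 (lam (t+1)).2 := by
      rw [hMLset t ht, hMLset t ht, hMLset t ht]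
      exact metaInf_convex hC hk0 (hfB t ht) (hfconv t ht) ϑs (lam (t+1)).1
        hγs0 (lt_of_lt_of_le hγlo0 hm2.2.1) hτ0.le hτ1'
    have q1e := combo_sq ϑs (lam (t+1)).1 ((lam t).1) τ
    have q2e : (τ * γs + (1 - τ) * (lam (t+1)).2 - (lam t).2) ^ 2
        = τ * (γs - (lam t).2) ^ 2 + (1 - τ) * ((lam (t+1)).2 - (lam t).2) ^ 2
          - τ * (1 - τ) * (γs - (lam (t+1)).2) ^ 2 := by ring
    rw [q1e, q2e] at hcomb
    have ediv : (τ * ‖ϑs - (lam t).1‖ ^ 2 + (1 - τ) * ‖(lam (t+1)).1 - (lam t).1‖ ^ 2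
          - τ * (1 - τ) * ‖ϑs - (lam (t+1)).1‖ ^ 2
          + (τ * (γs - (lam t).2) ^ 2 + (1 - τ) * ((lam (t+1)).2 - (lam t).2) ^ 2
            - τ * (1 - τ) * (γs - (lam (t+1)).2) ^ 2)) / (2 * α)
        = τ * ((‖ϑs - (lam t).1‖ ^ 2 + (γs - (lam t).2) ^ 2) / (2 * α))
          + (1 - τ) * ((‖(lam (t+1)).1 - (lam t).1‖ ^ 2
              + ((lam (t+1)).2 - (lam t).2) ^ 2) / (2 * α))
          - τ * (1 - τ) * ((‖ϑs - (lam (t+1)).1‖ ^ 2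
              + (γs - (lam (t+1)).2) ^ 2) / (2 * α)) := by
      field_simp
      ring
    rw [ediv] at hcomb
    exact sc_combine _ _ _ _ _ _ τ hτ0 hcomb hconvML
  -- Lipschitz step
  have hlipML : ∀ t ∈ Finset.Icc 1 T,
      ML t (lam t).1 (lam t).2 ≤ ML t (lam (t+1)).1 (lam (t+1)).2
        + α * L ^ 2 / 2
        + (‖(lam (t+1)).1 - (lam t).1‖ ^ 2 + ((lam (t+1)).2 - (lam t).2) ^ 2) / (2 * α) := by
    intro t ht
    have hm1 := hlamΛ t ht
    have hm2 := hmem t ht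
    have h1 := metaInf_lip (f := f t) (k := k) hC hk0 hγlo0 (hfB t ht)
      hm1.1 hm2.1 hm1.2.1 hm2.2.1
    rw [← hMLset t ht, ← hMLset t ht] at h1
    have hswap1 : ‖(lam t).1 - (lam (t+1)).1‖ = ‖(lam (t+1)).1 - (lam t).1‖ :=
      norm_sub_rev _ _
    have hswap2 : |(lam t).2 - (lam (t+1)).2| = |(lam (t+1)).2 - (lam t).2| :=
      abs_sub_comm _ _
    rw [hswap1, hswap2] at h1
    have hm0 : 0 ≤ max k (2 * C ^ 2 / γlo ^ 2) := le_trans hk0 (le_max_left _ _)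
    have h2 := cs2_s8 (2 * C / γlo) (max k (2 * C ^ 2 / γlo ^ 2))
      ‖(lam (t+1)).1 - (lam t).1‖ |(lam (t+1)).2 - (lam t).2|
      (by positivity) hm0 (norm_nonneg _) (abs_nonneg _)
    have h3 : Real.sqrt ((2 * C / γlo) ^ 2 + (max k (2 * C ^ 2 / γlo ^ 2)) ^ 2) ≤ L := by
      rw [hLdef]
      apply Real.sqrt_le_sqrt
      have e1 : (2 * C / γlo) ^ 2 = 4 * C ^ 2 / γlo ^ 2 := by
        rw [div_pow]; ring_nf
      have e2 : (2 * C ^ 2 / γlo ^ 2) ^ 2 = 4 * C ^ 4 / γlo ^ 4 := by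
        rw [div_pow]; ring_nf
      have e3 : k ^ 2 = (n:ℝ) ^ 2 * Γ ^ 4 / 4 := by rw [hkdef]; ring
      have p1 : (0:ℝ) ≤ 4 * C ^ 4 / γlo ^ 4 := by positivity
      have p2 : (0:ℝ) ≤ (n:ℝ) ^ 2 * Γ ^ 4 / 4 := by positivity
      rcases max_cases k (2 * C ^ 2 / γlo ^ 2) with ⟨he, -⟩ | ⟨he, -⟩ <;> rw [he] <;>
        linarith [e1, e2, e3]
    have h4 : ‖(lam (t+1)).1 - (lam t).1‖ ^ 2 + |(lam (t+1)).2 - (lam t).2| ^ 2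
        = ‖(lam (t+1)).1 - (lam t).1‖ ^ 2 + ((lam (t+1)).2 - (lam t).2) ^ 2 := by
      rw [sq_abs]
    rw [h4] at h2
    have h5 := amgm L α (‖(lam (t+1)).1 - (lam t).1‖ ^ 2 + ((lam (t+1)).2 - (lam t).2) ^ 2)
      hL0.le hα0 (by positivity)
    have h6 : Real.sqrt ((2 * C / γlo) ^ 2 + (max k (2 * C ^ 2 / γlo ^ 2)) ^ 2)
          * Real.sqrt (‖(lam (t+1)).1 - (lam t).1‖ ^ 2 + ((lam (t+1)).2 - (lam t).2) ^ 2)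
        ≤ L * Real.sqrt (‖(lam (t+1)).1 - (lam t).1‖ ^ 2
          + ((lam (t+1)).2 - (lam t).2) ^ 2) :=
      mul_le_mul_of_nonneg_right h3 (Real.sqrt_nonneg _)
    linarith
  -- per-step regret bound
  have hstep : ∀ t ∈ Finset.Icc 1 T,
      ML t (lam t).1 (lam t).2 ≤ ML t ϑs γs
        + ((‖ϑs - (lam t).1‖ ^ 2 + (γs - (lam t).2) ^ 2)
            - (‖ϑs - (lam (t+1)).1‖ ^ 2 + (γs - (lam (t+1)).2) ^ 2)) / (2 * α)
        + α * L ^ 2 / 2 := by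
    intro t ht
    have h1 := hsc t ht
    have h2 := hlipML t ht
    rw [sub_div] at *
    linarith
  -- telescoping sum
  have htel : ∑ t ∈ Finset.Icc 1 T,
      ((‖ϑs - (lam t).1‖ ^ 2 + (γs - (lam t).2) ^ 2)
        - (‖ϑs - (lam (t+1)).1‖ ^ 2 + (γs - (lam (t+1)).2) ^ 2))
      = (‖ϑs - (lam 1).1‖ ^ 2 + (γs - (lam 1).2) ^ 2)
        - (‖ϑs - (lam (T+1)).1‖ ^ 2 + (γs - (lam (T+1)).2) ^ 2) := by
    have h0 : Finset.Icc 1 T = Finset.Ico 1 (T+1) := by rw [Finset.Ico_add_one_right_eq_Icc]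
    rw [h0, Finset.sum_Ico_eq_sum_range]
    simp only [Nat.add_sub_cancel]
    have h1 := Finset.sum_range_sub'
      (fun i => ‖ϑs - (lam (1+i)).1‖ ^ 2 + (γs - (lam (1+i)).2) ^ 2) T
    convert h1 using 3 <;> norm_num [Nat.add_comm]
  have hQ1 : ‖ϑs - (lam 1).1‖ ^ 2 + (γs - (lam 1).2) ^ 2 ≤ 4 * C ^ 2 + C ^ 4 := by
    have h1 : ‖ϑs - (lam 1).1‖ ≤ 2 * C := by
      calc ‖ϑs - (lam 1).1‖ ≤ ‖ϑs‖ + ‖(lam 1).1‖ := norm_sub_le _ _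
        _ ≤ 2 * C := by linarith [hlam1.1]
    have h2 : ‖ϑs - (lam 1).1‖ ^ 2 ≤ 4 * C ^ 2 := by
      nlinarith [norm_nonneg (ϑs - (lam 1).1)]
    have h3 : (γs - (lam 1).2) ^ 2 ≤ C ^ 4 := by
      have h4 := hlam1.2.1
      have h5 := hlam1.2.2
      have h6 : γhi = C ^ 2 := hγhi
      nlinarith
    linarith
  -- summed regret bound
  have hsum2 : ∑ t ∈ Finset.Icc 1 T, ML t (lam t).1 (lam t).2
      ≤ (∑ t ∈ Finset.Icc 1 T, ML t ϑs γs)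
        + (4 * C ^ 2 + C ^ 4) / (2 * α) + (T:ℝ) * (α * L ^ 2 / 2) := by
    have h2 := Finset.sum_le_sum hstep
    have h3 : ∑ t ∈ Finset.Icc 1 T,
        (ML t ϑs γs
          + ((‖ϑs - (lam t).1‖ ^ 2 + (γs - (lam t).2) ^ 2)
              - (‖ϑs - (lam (t+1)).1‖ ^ 2 + (γs - (lam (t+1)).2) ^ 2)) / (2 * α)
          + α * L ^ 2 / 2)
        = (∑ t ∈ Finset.Icc 1 T, ML t ϑs γs)
          + ((‖ϑs - (lam 1).1‖ ^ 2 + (γs - (lam 1).2) ^ 2)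
              - (‖ϑs - (lam (T+1)).1‖ ^ 2 + (γs - (lam (T+1)).2) ^ 2)) / (2 * α)
          + (T:ℝ) * (α * L ^ 2 / 2) := by
      rw [Finset.sum_add_distrib, Finset.sum_add_distrib, Finset.sum_const,
        Nat.card_Icc, nsmul_eq_mul, ← Finset.sum_div, htel]
      norm_num
    rw [h3] at h2
    have h4 : ((‖ϑs - (lam 1).1‖ ^ 2 + (γs - (lam 1).2) ^ 2)
          - (‖ϑs - (lam (T+1)).1‖ ^ 2 + (γs - (lam (T+1)).2) ^ 2)) / (2 * α)
        ≤ (4 * C ^ 2 + C ^ 4) / (2 * α) := by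
      apply (div_le_div_iff_of_pos_right (by linarith : (0:ℝ) < 2 * α)).2
      have h5 : 0 ≤ ‖ϑs - (lam (T+1)).1‖ ^ 2 + (γs - (lam (T+1)).2) ^ 2 := by positivity
      linarith
    linarith
  -- the slack arithmetic
  have hL2 : L ^ 2 = (n : ℝ) ^ 2 * Γ ^ 4 / 4 + 4 * C ^ 2 * (n : ℝ) ^ (2 * β) +
      4 * C ^ 4 * (n : ℝ) ^ (4 * β) := by
    have e2 : γlo ^ 2 = (n:ℝ) ^ (-(2 * β)) := by
      rw [hγlo, ← Real.rpow_natCast ((n:ℝ) ^ (-β)) 2, ← Real.rpow_mul hn0.le]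
      norm_num
      congr 1
      ring
    have e4 : γlo ^ 4 = (n:ℝ) ^ (-(4 * β)) := by
      rw [hγlo, ← Real.rpow_natCast ((n:ℝ) ^ (-β)) 4, ← Real.rpow_mul hn0.le]
      norm_num
      congr 1
      ring
    have hx : L ^ 2 = (n : ℝ) ^ 2 * Γ ^ 4 / 4 + 4 * C ^ 2 / γlo ^ 2 +
        4 * C ^ 4 / γlo ^ 4 := by
      rw [hLdef]
      apply Real.sq_sqrt
      positivity
    rw [hx, e2, e4, Real.rpow_neg hn0.le, Real.rpow_neg hn0.le,
      div_inv_eq_mul, div_inv_eq_mul]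
  have harith : (4 * C ^ 2 + C ^ 4) / (2 * α) + (T:ℝ) * (α * L ^ 2 / 2)
      ≤ C * Real.sqrt (((n : ℝ) ^ 2 * Γ ^ 4 / 4 + 4 * C ^ 2 * (n : ℝ) ^ (2 * β) +
          4 * C ^ 4 * (n : ℝ) ^ (4 * β)) * (4 + C ^ 2) * T) := by
    set s1 : ℝ := Real.sqrt (4 + C ^ 2) with hs1
    set s2 : ℝ := Real.sqrt (T : ℝ) with hs2
    have hs1sq : s1 ^ 2 = 4 + C ^ 2 := Real.sq_sqrt (by positivity)
    have hs2sq : s2 ^ 2 = (T:ℝ) := Real.sq_sqrt hT0.le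
    have hs10 : 0 < s1 := Real.sqrt_pos.2 (by positivity)
    have hs20 : 0 < s2 := Real.sqrt_pos.2 hT0
    have hα' : α = C * s1 / (L * s2) := by
      rw [hαdef, Real.sqrt_div (by positivity : (0:ℝ) ≤ 4 + C ^ 2), ← hs1, ← hs2]
      field_simp
    have hRHS : Real.sqrt (((n : ℝ) ^ 2 * Γ ^ 4 / 4 + 4 * C ^ 2 * (n : ℝ) ^ (2 * β) +
        4 * C ^ 4 * (n : ℝ) ^ (4 * β)) * (4 + C ^ 2) * T) = L * s1 * s2 := by
      rw [← hL2, Real.sqrt_mul (by positivity), Real.sqrt_mul (by positivity),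
        Real.sqrt_sq hL0.le, ← hs1, ← hs2]
    rw [hRHS]
    have heq : (4 * C ^ 2 + C ^ 4) / (2 * α) + (T:ℝ) * (α * L ^ 2 / 2)
        = C * (L * s1 * s2) := by
      rw [hα', show (4 * C ^ 2 + C ^ 4) = C ^ 2 * s1 ^ 2 by rw [hs1sq]; ring,
        show (T:ℝ) = s2 ^ 2 from hs2sq.symm]
      field_simp
      ring
    linarith [heq.le]
  -- comparator bound
  have hcmp : ∑ t ∈ Finset.Icc 1 T, ML t ϑs γs
      ≤ (∑ t ∈ Finset.Icc 1 T, ∑ i ∈ Finset.Icc 1 n, ℓ t i (θ t))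
        + (T:ℝ) * (γs * k) + S / (2 * γs) := by
    have h1 : ∀ t ∈ Finset.Icc 1 T, ML t ϑs γs
        ≤ (∑ i ∈ Finset.Icc 1 n, ℓ t i (θ t)) + γs * k + ‖θ t - ϑs‖ ^ 2 / (2 * γs) := by
      intro t ht
      rw [hMLset t ht ϑs γs]
      exact metaInf_le (hfB t ht) hk0 hγs0 ϑs (θ t) (hθ t ht)
    have h2 := Finset.sum_le_sum h1
    have h3 : ∑ t ∈ Finset.Icc 1 T,
        ((∑ i ∈ Finset.Icc 1 n, ℓ t i (θ t)) + γs * k + ‖θ t - ϑs‖ ^ 2 / (2 * γs))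
        = (∑ t ∈ Finset.Icc 1 T, ∑ i ∈ Finset.Icc 1 n, ℓ t i (θ t))
          + (T:ℝ) * (γs * k) + S / (2 * γs) := by
      rw [Finset.sum_add_distrib, Finset.sum_add_distrib, Finset.sum_const,
        Nat.card_Icc, nsmul_eq_mul, ← Finset.sum_div, ← hSdef]
      norm_num
    rw [h3] at h2
    exact h2
  have hn1β : γlo * (n:ℝ) = (n:ℝ) ^ (1 - β) := by
    have h1 : (n:ℝ) ^ (1 - β) = (n:ℝ) ^ (1:ℝ) * (n:ℝ) ^ (-β) := by
      rw [show (1:ℝ) - β = 1 + -β by ring, Real.rpow_add hn0]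
    rw [h1, Real.rpow_one, hγlo]
    ring
  have hfinal : (T:ℝ) * (γs * k) + S / (2 * γs)
      ≤ Γ ^ 2 * T * (n : ℝ) ^ (1 - β) / 2 + σv * T * (Γ * rn + 1 / C) := by
    have hSeq : S = σv ^ 2 * (T:ℝ) := by
      rw [hσsq]; field_simp
    have hgoal2 : σv * T * (Γ * rn + 1 / C) = σv * T * (Γ * rn) + σv * T / C := by
      field_simp
    rw [hSeq, ← hn1β, hkdef, hgoal2, hγs]
    have h4 : Γ ^ 2 * (T:ℝ) * (γlo * (n:ℝ)) / 2 + σv * T * (Γ * rn) + σv * T / C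
        = Γ ^ 2 * T * (γlo * ↑n) / 2 + (σv * T * (Γ * rn) + σv * T / C) := by ring
    have := final_arith Γ C γlo γhi σv rn (T:ℝ) (n:ℝ) hΓ hC hγlo0 hγhi hlohi hT0 hrn0
      hrnsq hσ0 hσ2C
    linarith
  have hsum1 : ∑ t ∈ Finset.Icc 1 T, s t
      ≤ ∑ t ∈ Finset.Icc 1 T, ML t (lam t).1 (lam t).2 :=
    Finset.sum_le_sum hs
  calc ∑ t ∈ Finset.Icc 1 T, s t
      ≤ ∑ t ∈ Finset.Icc 1 T, ML t (lam t).1 (lam t).2 := hsum1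
    _ ≤ (∑ t ∈ Finset.Icc 1 T, ML t ϑs γs)
        + (4 * C ^ 2 + C ^ 4) / (2 * α) + (T:ℝ) * (α * L ^ 2 / 2) := hsum2
    _ ≤ _ := by linarith [hcmp, harith, hfinal]
end

section
/- Let n ≥ 1, T > 0, β > 0, Γ > 0, C > 0 be real numbers with n^{-β} ≤ C², and let σ be a real number with 0 ≤ σ ≤ 2C. Define γ* = min( C², max( n^{-β}, σ/(Γ√n) ) ). Then γ* Γ² n T / 2 + T σ² / (2 γ*) ≤ Γ² T n^{1-β} / 2 + σ Γ T √n + T σ / C. -/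
/-- Scalar inequality combining the bounds (proof:thm:4) and (proof:thm:5) in the
    proof of Theorem 1: the clipped minimizer γ* = (n^{-β} ∨ σ/(Γ√n)) ∧ C² of
    γ ↦ γΓ²nT/2 + Tσ²/(2γ) achieves the stated explicit bound. -/
theorem clipped_step_size_bound
    (n T β Γ C σ : ℝ) (hn : 1 ≤ n) (hT : 0 < T) (hβ : 0 < β)
    (hΓ : 0 < Γ) (hC : 0 < C) (hβC : n ^ (-β) ≤ C ^ 2)
    (hσ0 : 0 ≤ σ) (hσ : σ ≤ 2 * C) :
    min (C ^ 2) (max (n ^ (-β)) (σ / (Γ * Real.sqrt n))) * Γ ^ 2 * n * T / 2 +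
      T * σ ^ 2 / (2 * min (C ^ 2) (max (n ^ (-β)) (σ / (Γ * Real.sqrt n)))) ≤
        Γ ^ 2 * T * n ^ (1 - β) / 2 + σ * Γ * T * Real.sqrt n + T * σ / C := by
  have hn0 : (0:ℝ) < n := by linarith
  set s := Real.sqrt n with hs_def
  have hs1 : 1 ≤ s := by
    rw [hs_def, show (1:ℝ) = Real.sqrt 1 by simp]
    exact Real.sqrt_le_sqrt hn
  have hs0 : 0 < s := by linarith
  have hss : s * s = n := Real.mul_self_sqrt (le_of_lt hn0)
  set a := n ^ (-β) with ha_def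
  have ha0 : 0 < a := Real.rpow_pos_of_pos hn0 _
  set m := σ / (Γ * s) with hm_def
  have hm0 : 0 ≤ m := div_nonneg hσ0 (by positivity)
  set g := min (C ^ 2) (max a m) with hg_def
  have hg0 : 0 < g := lt_min (by positivity) (lt_of_lt_of_le ha0 (le_max_left _ _))
  -- n^(1-β) = a * n
  have hpow : n ^ (1 - β) = a * n := by
    rw [ha_def, show (1 - β) = -β + 1 by ring, Real.rpow_add hn0, Real.rpow_one]
  -- bound term1
  have h1 : g * Γ ^ 2 * n * T / 2 ≤ Γ ^ 2 * T * n ^ (1 - β) / 2 + σ * Γ * T * s / 2 := by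
    have hgle : g ≤ a + m := le_trans (min_le_right _ _) (max_le (by linarith) (by linarith))
    have hm_eq : m * (Γ ^ 2 * n * T) = σ * Γ * T * s := by
      rw [hm_def, ← hss]
      field_simp
    calc g * Γ ^ 2 * n * T / 2 ≤ (a + m) * Γ ^ 2 * n * T / 2 := by
          have : (0:ℝ) < Γ ^ 2 * n * T := by positivity
          nlinarith
      _ = Γ ^ 2 * T * (a * n) / 2 + m * (Γ ^ 2 * n * T) / 2 := by ring
      _ = Γ ^ 2 * T * n ^ (1 - β) / 2 + σ * Γ * T * s / 2 := by rw [hpow, hm_eq]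
  -- bound term2
  have h2 : T * σ ^ 2 / (2 * g) ≤ σ * Γ * T * s / 2 + T * σ / C := by
    rcases eq_or_lt_of_le hσ0 with h | hσp
    · rw [← h]; simp
    · have hmp : 0 < m := div_pos hσp (by positivity)
      have hgge : min (C ^ 2) m ≤ g := min_le_min le_rfl (le_max_right _ _)
      have hminpos : 0 < min (C ^ 2) m := lt_min (by positivity) hmp
      have step : T * σ ^ 2 / (2 * g) ≤ T * σ ^ 2 / (2 * min (C ^ 2) m) := by
        apply div_le_div_of_nonneg_left (by positivity) (by positivity)
        linarith
      have step2 : T * σ ^ 2 / (2 * min (C ^ 2) m) ≤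
          T * σ ^ 2 / (2 * C ^ 2) + T * σ ^ 2 / (2 * m) := by
        rcases le_total (C ^ 2) m with h | h
        · rw [min_eq_left h]
          have : (0:ℝ) ≤ T * σ ^ 2 / (2 * m) := by positivity
          linarith
        · rw [min_eq_right h]
          have : (0:ℝ) ≤ T * σ ^ 2 / (2 * C ^ 2) := by positivity
          linarith
      have stepC : T * σ ^ 2 / (2 * C ^ 2) ≤ T * σ / C := by
        rw [div_le_div_iff₀ (by positivity) hC]
        nlinarith [mul_nonneg (mul_nonneg (mul_nonneg (sub_nonneg.2 hσ) hT.le) hσ0) hC.le]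
      have stepm : T * σ ^ 2 / (2 * m) = σ * Γ * T * s / 2 := by
        rw [hm_def]
        field_simp
      linarith
  linarith
end

section
/- Let n ≥ 1 and M ≥ 1 be natural numbers and b > 0 a real number. Define η̂ = min( 1, max( 1/n, (2/b)√(2 log M / n) ) ). Then η̂ · n b² / 8 + (log M)/η̂ ≤ b²/8 + b √( n log M / 2 ) + log M. -/
set_option maxHeartbeats 1000000


/-- Key scalar computation in the proof of Theorem 2: plugging the clipped rate
    η̂ = 1 ∧ (1/n ∨ (2/b)√(2 log M / n)) into the EWA regret term. -/
theorem clipped_rate_bound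
    (n M : ℕ) (hn : 1 ≤ n) (hM : 1 ≤ M) (b : ℝ) (hb : 0 < b) :
    min 1 (max (1 / (n : ℝ)) ((2 / b) * Real.sqrt (2 * Real.log M / n))) * n * b ^ 2 / 8 +
      Real.log M /
        min 1 (max (1 / (n : ℝ)) ((2 / b) * Real.sqrt (2 * Real.log M / n))) ≤
      b ^ 2 / 8 + b * Real.sqrt (n * Real.log M / 2) + Real.log M := by
  have hn0 : (0:ℝ) < n := by exact_mod_cast hn
  set L := Real.log M with hLdef
  have hL : 0 ≤ L := Real.log_nonneg (by exact_mod_cast hM)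
  set c := Real.sqrt (2 * L / n) with hc
  set d := Real.sqrt ((n:ℝ) * L / 2) with hd
  have hc0 : 0 ≤ c := Real.sqrt_nonneg _
  have hd0 : 0 ≤ d := Real.sqrt_nonneg _
  have hc2 : c ^ 2 = 2 * L / n := Real.sq_sqrt (by positivity)
  have hd2 : d ^ 2 = (n:ℝ) * L / 2 := Real.sq_sqrt (by positivity)
  have hcd : c * d = L := by
    rw [hc, hd, ← Real.sqrt_mul (by positivity)]
    rw [show 2 * L / n * ((n:ℝ) * L / 2) = L ^ 2 by field_simp]
    exact Real.sqrt_sq hL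
  rcases le_total ((2 / b) * c) (1 / (n:ℝ)) with h | h
  · rw [max_eq_left h, min_eq_right (by
      rw [div_le_one hn0]; exact_mod_cast hn)]
    have h' : 2 * c * n ≤ 1 * b := by
      rw [div_mul_eq_mul_div, div_le_div_iff₀ hb hn0] at h
      linarith
    have e1 : (1 / (n:ℝ)) * n = 1 := by field_simp
    have e2 : L / (1 / (n:ℝ)) = L * n := by field_simp
    rw [e2]
    have key : L * n ≤ b * d / 2 := by
      nlinarith [mul_le_mul_of_nonneg_right h' hd0, hcd]
    nlinarith [mul_nonneg (mul_nonneg hb.le hd0) hL, e1]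
  · rw [max_eq_right h]
    have hcpos : 0 < c := by
      by_contra hcc
      push_neg at hcc
      have : c = 0 := le_antisymm hcc hc0
      rw [this, mul_zero] at h
      have : (0:ℝ) < 1 / n := by positivity
      linarith
    have hnc : (n:ℝ) * c = 2 * d := by
      have h1 : c * ((n:ℝ) * c) = c * (2 * d) := by
        have h0 : (n:ℝ) * c ^ 2 = 2 * (c * d) := by rw [hc2, hcd]; field_simp
        nlinarith [h0]
      exact mul_left_cancel₀ (ne_of_gt hcpos) h1
    rcases le_total ((2 / b) * c) 1 with h2 | h2
    · rw [min_eq_right h2, ← hcd]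
      have hbne : b ≠ 0 := ne_of_gt hb
      have hcne : c ≠ 0 := ne_of_gt hcpos
      have key : (2 / b) * c * n * b ^ 2 / 8 + c * d / ((2 / b) * c) = b * d := by
        field_simp
        linear_combination 4 * hnc
      rw [key]
      nlinarith [mul_nonneg hc0 hd0, sq_nonneg b]
    · rw [min_eq_left h2]
      have hb2c : b ≤ 2 * c := by
        rw [div_mul_eq_mul_div, le_div_iff₀ hb] at h2
        linarith
      have hLn : (n:ℝ) * b ^ 2 ≤ 8 * L := by
        have := mul_le_mul hb2c hb2c hb.le (by linarith [hc0])
        have h4 : b ^ 2 ≤ 4 * (2 * L / n) := by nlinarith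
        calc (n:ℝ) * b ^ 2 ≤ (n:ℝ) * (4 * (2 * L / n)) := by
              exact mul_le_mul_of_nonneg_left h4 hn0.le
          _ = 8 * L := by field_simp; ring
      have hdnb : (n:ℝ) * b / 4 ≤ d := by
        have hsq : ((n:ℝ) * b / 4) ^ 2 ≤ d ^ 2 := by
          rw [hd2]; nlinarith [hLn, hn0]
        nlinarith [hsq, hd0, hn0, hb]
      have e1 : L / 1 = L := by simp
      rw [e1]
      have hm := mul_le_mul_of_nonneg_left hdnb hb.le
      nlinarith [mul_nonneg hb.le hd0]
end

section
/- Let n, T ≥ 1 and M ≥ 1 be natural numbers, B > 0, and let Θ₀ be a finite set of cardinality M. For t = 1,…,T and i = 1,…,n let ℓ_{t,i} : Θ₀ → ℝ take values in [0, B]. Set b_t = max_{θ∈Θ₀, 1≤i≤n} ℓ_{t,i}(θ) and b = max_{1≤t≤T} b_t. For η ∈ [1/n, 1] define L_t(η) = min_{θ∈Θ₀} Σ_{i=1}^n ℓ_{t,i}(θ) + η n b_t²/8 + (log M)/η. Set L = n² log M + nB²/8 and α = (1/L)√(2/T). Let η_1 = 1 and, for t = 1,…,T, let η_{t+1} ∈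 [1/n, 1] minimize η ↦ L_t(η) + (η - η_t)²/(2α) over [1/n, 1]. Suppose s_1,…,s_T ∈ ℝ satisfy s_t ≤ L_t(η_t) for each t. Then: Σ_{t=1}^T s_t ≤ Σ_{t=1}^T min_{θ∈Θ₀} Σ_{i=1}^n ℓ_{t,i}(θ) + bT√(n log M / 2) + T log M + b²T/8 + (n² log M + nB²/8)√(2T). -/
lemma ewa_combine (Fu Fe Fx A l : ℝ) (hl0 : 0 < l)
    (h1 : Fe ≤ Fx) (hF : Fx ≤ l*Fu + (1-l)*Fe - l*(1-l)*A) : (1-l)*A ≤ Fu - Fe := by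
  nlinarith [h1.trans hF]

lemma ewa_limit (A R : ℝ) (hA0 : 0 ≤ A)
    (key : ∀ l : ℝ, 0 < l → l < 1 → (1-l)*A ≤ R) : A ≤ R := by
  by_contra hcon
  push_neg at hcon
  have hR2 : A/2 ≤ R := by have := key (1/2) (by norm_num) (by norm_num); linarith
  have hApos : 0 < A := by linarith
  have hl0 : 0 < (A-R)/(2*A) := div_pos (by linarith) (by linarith)
  have hl1 : (A-R)/(2*A) < 1 := by rw [div_lt_one (by linarith)]; linarith
  have h := key _ hl0 hl1
  have heq : (1 - (A-R)/(2*A))*A = (A+R)/2 := by field_simp; ring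
  rw [heq] at h
  linarith

/-- Strong-convexity consequence of prox minimality for g(x)=c x + d/x. -/
lemma ewa_strong_min (lo c d α p e u : ℝ) (hlo : 0 < lo) (hc : 0 ≤ c) (hd : 0 ≤ d)
    (hα : 0 < α) (he : e ∈ Set.Icc lo 1) (hu : u ∈ Set.Icc lo 1)
    (hmin : ∀ x ∈ Set.Icc lo 1,
      c*e + d/e + (e-p)^2/(2*α) ≤ c*x + d/x + (x-p)^2/(2*α)) :
    c*e + d/e + (e-p)^2/(2*α) + (u-e)^2/(2*α) ≤ c*u + d/u + (u-p)^2/(2*α) := by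
  obtain ⟨hel, heu⟩ := he
  obtain ⟨hul, huu⟩ := hu
  have hepos : 0 < e := lt_of_lt_of_le hlo hel
  have hupos : 0 < u := lt_of_lt_of_le hlo hul
  have hA0 : (0:ℝ) ≤ (u-e)^2/(2*α) := div_nonneg (sq_nonneg _) (by linarith)
  have key : ∀ l : ℝ, 0 < l → l < 1 → (1-l)*((u-e)^2/(2*α)) ≤
      (c*u + d/u + (u-p)^2/(2*α)) - (c*e + d/e + (e-p)^2/(2*α)) := by
    intro l hl0 hl1
    have hxmem : l*u + (1-l)*e ∈ Set.Icc lo 1 := by constructor <;> nlinarith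
    have hxpos : 0 < l*u + (1-l)*e := lt_of_lt_of_le hlo hxmem.1
    have h1 := hmin _ hxmem
    have hinv : d/(l*u + (1-l)*e) ≤ l*(d/u) + (1-l)*(d/e) := by
      rw [div_le_iff₀ hxpos, ← sub_nonneg]
      have expand : (l*(d/u)+(1-l)*(d/e))*(l*u + (1-l)*e) - d
          = d*(l*(1-l)*(u-e)^2)/(u*e) := by field_simp; ring
      rw [expand]
      apply div_nonneg _ (le_of_lt (mul_pos hupos hepos))
      apply mul_nonneg hd
      apply mul_nonneg (mul_nonneg (le_of_lt hl0) (by linarith)) (sq_nonneg _)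
    have hF : c*(l*u + (1-l)*e) + d/(l*u + (1-l)*e) + ((l*u + (1-l)*e)-p)^2/(2*α)
        ≤ l*(c*u + d/u + (u-p)^2/(2*α)) + (1-l)*(c*e + d/e + (e-p)^2/(2*α))
          - l*(1-l)*((u-e)^2/(2*α)) := by
      have hquad : ((l*u + (1-l)*e)-p)^2/(2*α) = l*((u-p)^2/(2*α))
          + (1-l)*((e-p)^2/(2*α)) - l*(1-l)*((u-e)^2/(2*α)) := by
        field_simp; ring
      rw [hquad]; nlinarith [hinv]
    exact ewa_combine _ _ _ _ _ hl0 h1 hF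
  have := ewa_limit _ _ hA0 key
  linarith


lemma ewa_lip (K X Lc α δ : ℝ) (hα : 0 < α) (hX : X*(2*α) = δ^2)
    (hK1 : K ≤ Lc) (hK2 : -Lc ≤ K) : K*δ - X ≤ α*Lc^2/2 := by
  have hKsq : K^2 ≤ Lc^2 := by nlinarith
  nlinarith [sq_nonneg (δ - α*K), mul_nonneg hα.le (sub_nonneg.2 hKsq)]

/-- Per-step OPMS inequality for g(x)=c x + d/x on [lo,1]. -/
lemma ewa_step (lo c d α Lc p e u : ℝ) (hlo : 0 < lo) (hc : 0 ≤ c) (hd : 0 ≤ d)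
    (hα : 0 < α) (hLc : c + d/lo^2 ≤ Lc)
    (hp : p ∈ Set.Icc lo 1) (he : e ∈ Set.Icc lo 1) (hu : u ∈ Set.Icc lo 1)
    (hmin : ∀ x ∈ Set.Icc lo 1,
      c*e + d/e + (e-p)^2/(2*α) ≤ c*x + d/x + (x-p)^2/(2*α)) :
    c*p + d/p ≤ c*u + d/u + (u-p)^2/(2*α) - (u-e)^2/(2*α) + α*Lc^2/2 := by
  have hsm := ewa_strong_min lo c d α p e u hlo hc hd hα he hu hmin
  have hppos : 0 < p := lt_of_lt_of_le hlo hp.1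
  have hepos : 0 < e := lt_of_lt_of_le hlo he.1
  -- Lipschitz part: c*p + d/p - (c*e + d/e) - (e-p)^2/(2*α) ≤ α*Lc^2/2
  have hpe : lo^2 ≤ p*e := by nlinarith [hp.1, he.1]
  have hpepos : 0 < p*e := mul_pos hppos hepos
  have hdpe : d/(p*e) ≤ d/lo^2 := by
    apply div_le_div_of_nonneg_left hd (by positivity) hpe
  have hK1 : c - d/(p*e) ≤ Lc := by
    have : 0 ≤ d/(p*e) := div_nonneg hd (le_of_lt hpepos)
    linarith
  have hK2 : -Lc ≤ c - d/(p*e) := by linarith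
  have hrepr : c*p + d/p - (c*e + d/e) = (c - d/(p*e))*(p-e) := by
    field_simp; ring
  have hsq : (c - d/(p*e))*(p-e) - (p-e)^2/(2*α) ≤ α*Lc^2/2 := by
    apply ewa_lip _ _ _ _ _ hα _ hK1 hK2
    field_simp
  have hpe2 : (e-p)^2 = (p-e)^2 := by ring
  rw [hpe2] at hsm
  linarith [hsm, hsq, hrepr.le, hrepr.ge]


lemma sq_eq_of_nonneg {a b : ℝ} (ha : 0 ≤ a) (hb : 0 ≤ b) (h : a^2 = b^2) : a = b := by
  have := congrArg Real.sqrt h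
  rwa [Real.sqrt_sq ha, Real.sqrt_sq hb] at this

/-- Existence of a good comparator learning rate in [1/n, 1]. -/
lemma ewa_comparator (n : ℕ) (hn : 1 ≤ n) (b d : ℝ) (hb : 0 ≤ b) (hd : 0 ≤ d) :
    ∃ u ∈ Set.Icc (1/(n:ℝ)) 1,
      u * ((n:ℝ) * b^2/8) + d/u ≤ b * Real.sqrt ((n:ℝ)*d/2) + d + b^2/8 := by
  have hn0 : (0:ℝ) < (n:ℝ) := by exact_mod_cast hn
  have hn1 : (1:ℝ) ≤ (n:ℝ) := by exact_mod_cast hn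
  have hinv1 : 1/(n:ℝ) ≤ 1 := by rw [div_le_one hn0]; exact hn1
  have hS0 : 0 ≤ Real.sqrt ((n:ℝ)*d/2) := Real.sqrt_nonneg _
  rcases le_or_gt ((n:ℝ)*b^2/8) d with h1 | h1
  · -- case 1 : u = 1
    refine ⟨1, ⟨hinv1, le_refl 1⟩, ?_⟩
    have hkey : (n:ℝ)*b/4 ≤ Real.sqrt ((n:ℝ)*d/2) := by
      have h : (n:ℝ)*b/4 = Real.sqrt (((n:ℝ)*b/4)^2) := (Real.sqrt_sq (by positivity)).symm
      rw [h]
      apply Real.sqrt_le_sqrt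
      nlinarith
    have : (n:ℝ)*b^2/4 ≤ b * Real.sqrt ((n:ℝ)*d/2) := by nlinarith
    nlinarith
  rcases le_or_gt d (b^2/(8*(n:ℝ))) with h2 | h2
  · -- case 3 : u = 1/n
    refine ⟨1/(n:ℝ), ⟨le_refl _, hinv1⟩, ?_⟩
    have hval : (1/(n:ℝ)) * ((n:ℝ)*b^2/8) = b^2/8 := by field_simp
    have hdiv : d/(1/(n:ℝ)) = d*(n:ℝ) := by field_simp
    rw [hval, hdiv]
    have h2' : d*(8*(n:ℝ)) ≤ b^2 := by rwa [le_div_iff₀ (by positivity)] at h2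
    have hbig : Real.sqrt (8*(n:ℝ)*d) ≤ b := by
      rw [show b = Real.sqrt (b^2) from (Real.sqrt_sq hb).symm]
      apply Real.sqrt_le_sqrt
      nlinarith
    have hprod : Real.sqrt (8*(n:ℝ)*d) * Real.sqrt ((n:ℝ)*d/2) = 2*(n:ℝ)*d := by
      rw [← Real.sqrt_mul (by positivity)]
      rw [show (8*(n:ℝ)*d) * ((n:ℝ)*d/2) = (2*(n:ℝ)*d)^2 by ring]
      exact Real.sqrt_sq (by positivity)
    have hfin : 2*(n:ℝ)*d ≤ b * Real.sqrt ((n:ℝ)*d/2) := by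
      rw [← hprod]
      exact mul_le_mul_of_nonneg_right hbig hS0
    nlinarith
  · -- case 2 : u = sqrt(8 d / (n b^2))
    have hbpos : 0 < b := by
      rcases eq_or_lt_of_le hb with h | h
      · exfalso; rw [← h] at h1; norm_num at h1; linarith
      · exact h
    have hdpos : 0 < d := lt_trans (by positivity) h2
    have h2' : b^2 < 8*(n:ℝ)*d := by
      rw [div_lt_iff₀ (by positivity)] at h2; nlinarith
    have h1' : 8*d < (n:ℝ)*b^2 := by linarith
    have hwpos : 0 < 8*d/((n:ℝ)*b^2) := by positivity
    have hupos : 0 < Real.sqrt (8*d/((n:ℝ)*b^2)) := Real.sqrt_pos.mpr hwpos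
    have hu2 : (Real.sqrt (8*d/((n:ℝ)*b^2)))^2 = 8*d/((n:ℝ)*b^2) := Real.sq_sqrt hwpos.le
    have hule : Real.sqrt (8*d/((n:ℝ)*b^2)) ≤ 1 := by
      rw [show (1:ℝ) = Real.sqrt 1 by simp]
      apply Real.sqrt_le_sqrt
      rw [div_le_one (by positivity)]
      linarith
    have huge : 1/(n:ℝ) ≤ Real.sqrt (8*d/((n:ℝ)*b^2)) := by
      rw [show (1/(n:ℝ)) = Real.sqrt ((1/(n:ℝ))^2) from (Real.sqrt_sq (by positivity)).symm]
      apply Real.sqrt_le_sqrt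
      rw [div_pow, one_pow, div_le_div_iff₀ (by positivity) (by positivity)]
      nlinarith
    refine ⟨Real.sqrt (8*d/((n:ℝ)*b^2)), ⟨huge, hule⟩, ?_⟩
    have hSsq : (Real.sqrt ((n:ℝ)*d/2))^2 = (n:ℝ)*d/2 := Real.sq_sqrt (by positivity)
    have e1 : Real.sqrt (8*d/((n:ℝ)*b^2)) * ((n:ℝ)*b^2/8) = b/2 * Real.sqrt ((n:ℝ)*d/2) := by
      apply sq_eq_of_nonneg (by positivity) (by positivity)
      rw [mul_pow, mul_pow, hu2, hSsq]
      field_simp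
      ring
    have e2 : d/(Real.sqrt (8*d/((n:ℝ)*b^2))) = b/2 * Real.sqrt ((n:ℝ)*d/2) := by
      apply sq_eq_of_nonneg (by positivity) (by positivity)
      rw [div_pow, mul_pow, hu2, hSsq]
      field_simp
      ring
    rw [e1, e2]
    nlinarith



lemma ewa_alpha (L α : ℝ) (T : ℕ) (hT : 1 ≤ T) (hL : 0 < L)
    (hα : α = (1/L)*Real.sqrt (2/(T:ℝ))) :
    1/(2*α) + (T:ℝ)*α*L^2/2 ≤ L*Real.sqrt (2*(T:ℝ)) := by
  have hT0 : (0:ℝ) < (T:ℝ) := by exact_mod_cast hT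
  have hsT : 0 < Real.sqrt (T:ℝ) := Real.sqrt_pos.mpr hT0
  have hs2 : 0 < Real.sqrt 2 := Real.sqrt_pos.mpr (by norm_num)
  have hsT2 : (Real.sqrt (T:ℝ))^2 = (T:ℝ) := Real.sq_sqrt hT0.le
  have hs22 : (Real.sqrt 2)^2 = 2 := Real.sq_sqrt (by norm_num)
  have hdiv : Real.sqrt (2/(T:ℝ)) = Real.sqrt 2 / Real.sqrt (T:ℝ) := by
    rw [Real.sqrt_div' 2 (by norm_num)]
  have hmul : Real.sqrt (2*(T:ℝ)) = Real.sqrt 2 * Real.sqrt (T:ℝ) := by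
    rw [Real.sqrt_mul (by norm_num)]
  have hαval : α = Real.sqrt 2 / (L * Real.sqrt (T:ℝ)) := by
    rw [hα, hdiv]; field_simp
  have hαpos : 0 < α := by rw [hαval]; positivity
  have hα2 : α^2 = 2/(L^2*(T:ℝ)) := by
    rw [hαval, div_pow, hs22, mul_pow, hsT2]
  have e1 : 1/(2*α) = L*Real.sqrt 2*Real.sqrt (T:ℝ)/4 := by
    apply sq_eq_of_nonneg (by positivity) (by positivity)
    simp only [div_pow, mul_pow]
    rw [hs22, hsT2, hα2]
    field_simp
    ring
  have e2 : (T:ℝ)*α*L^2/2 = L*Real.sqrt 2*Real.sqrt (T:ℝ)/2 := by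
    apply sq_eq_of_nonneg (by positivity) (by positivity)
    simp only [div_pow, mul_pow]
    rw [hs22, hsT2, hα2]
    field_simp
  rw [e1, e2, hmul]
  have hQ : 0 ≤ L*Real.sqrt 2*Real.sqrt (T:ℝ) := by positivity
  nlinarith [hQ]


lemma ewa_tele (f : ℕ → ℝ) (T : ℕ) :
    ∑ t ∈ Finset.Icc 1 T, (f t - f (t+1)) = f 1 - f (T+1) := by
  induction T with
  | zero => simp
  | succ k ih =>
    rw [Finset.sum_Icc_succ_top (Nat.succ_le_succ (Nat.zero_le k)), ih]
    ring

/-- Abstract core of Theorem 2, with the per-task oracle losses `m t` opaque. -/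
lemma ewa_main (n T : ℕ) (hn : 1 ≤ n) (hT : 1 ≤ T)
    (B : ℝ) (hB : 0 < B) (bt : ℕ → ℝ) (b d : ℝ)
    (hd : 0 ≤ d)
    (hbt0 : ∀ t ∈ Finset.Icc 1 T, 0 ≤ bt t)
    (hbtB : ∀ t ∈ Finset.Icc 1 T, bt t ≤ B)
    (hble : ∀ t ∈ Finset.Icc 1 T, bt t ≤ b)
    (hb0 : 0 ≤ b)
    (m : ℕ → ℝ)
    (ML : ℕ → ℝ → ℝ)
    (hML : ∀ t ∈ Finset.Icc 1 T, ∀ x : ℝ,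
      ML t x = m t + x * n * bt t ^ 2 / 8 + d / x)
    (L α : ℝ)
    (hLdef : L = (n : ℝ) ^ 2 * d + n * B ^ 2 / 8)
    (hαdef : α = (1 / L) * Real.sqrt (2 / T))
    (η : ℕ → ℝ) (hη1 : η 1 = 1)
    (hηmem : ∀ t ∈ Finset.Icc 1 T, η (t + 1) ∈ Set.Icc (1 / (n : ℝ)) 1)
    (hmin : ∀ t ∈ Finset.Icc 1 T, ∀ x ∈ Set.Icc (1 / (n : ℝ)) 1,
      ML t (η (t + 1)) + (η (t + 1) - η t) ^ 2 / (2 * α) ≤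
        ML t x + (x - η t) ^ 2 / (2 * α))
    (s : ℕ → ℝ) (hs : ∀ t ∈ Finset.Icc 1 T, s t ≤ ML t (η t)) :
    ∑ t ∈ Finset.Icc 1 T, s t ≤
      ∑ t ∈ Finset.Icc 1 T, m t
      + b * T * Real.sqrt ((n : ℝ) * d / 2)
      + T * d
      + b ^ 2 * T / 8
      + ((n : ℝ) ^ 2 * d + n * B ^ 2 / 8) * Real.sqrt (2 * T) := by
  have hn0 : (0:ℝ) < (n:ℝ) := by exact_mod_cast hn
  have hn1 : (1:ℝ) ≤ (n:ℝ) := by exact_mod_cast hn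
  have hlo : (0:ℝ) < 1/(n:ℝ) := by positivity
  have hinv1 : 1/(n:ℝ) ≤ 1 := by rw [div_le_one hn0]; exact hn1
  have hLpos : 0 < L := by
    rw [hLdef]
    have h1 : 0 < (n:ℝ)*B^2/8 := by positivity
    have h2 : 0 ≤ (n:ℝ)^2*d := mul_nonneg (sq_nonneg _) hd
    linarith
  have hαpos : 0 < α := by
    rw [hαdef]
    have hT0 : (0:ℝ) < (T:ℝ) := by exact_mod_cast hT
    have : 0 < Real.sqrt (2/(T:ℝ)) := Real.sqrt_pos.mpr (by positivity)
    positivity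
  have hmem : ∀ t ∈ Finset.Icc 1 T, η t ∈ Set.Icc (1/(n:ℝ)) 1 := by
    intro t ht
    obtain ⟨ht1, ht2⟩ := Finset.mem_Icc.mp ht
    rcases eq_or_lt_of_le ht1 with h | h
    · rw [← h, hη1]; exact ⟨hinv1, le_refl 1⟩
    · obtain ⟨k, rfl⟩ : ∃ k, t = k + 1 := ⟨t-1, by omega⟩
      exact hηmem k (Finset.mem_Icc.mpr (by omega))
  obtain ⟨u, humem, hucomp⟩ := ewa_comparator n hn b d hb0 hd
  have hu0 : 0 ≤ u := le_trans hlo.le humem.1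
  have key : ∀ t ∈ Finset.Icc 1 T,
      s t ≤ m t
        + (b * Real.sqrt ((n:ℝ)*d/2) + d + b^2/8)
        + ((u - η t)^2/(2*α) - (u - η (t+1))^2/(2*α))
        + α*L^2/2 := by
    intro t ht
    have hbt0' : 0 ≤ bt t := hbt0 t ht
    have hbtB' : bt t ≤ B := hbtB t ht
    have hc : 0 ≤ (n:ℝ)*bt t^2/8 := by positivity
    have hLc : (n:ℝ)*bt t^2/8 + d/(1/(n:ℝ))^2 ≤ L := by
      have h1 : d/(1/(n:ℝ))^2 = d*(n:ℝ)^2 := by field_simp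
      have hbtsq : bt t^2 ≤ B^2 := by nlinarith
      have h2 : (n:ℝ)*bt t^2 ≤ (n:ℝ)*B^2 := mul_le_mul_of_nonneg_left hbtsq hn0.le
      rw [h1, hLdef]
      nlinarith
    have hminx : ∀ x ∈ Set.Icc (1/(n:ℝ)) 1,
        ((n:ℝ)*bt t^2/8)*(η (t+1)) + d/(η (t+1)) + (η (t+1) - η t)^2/(2*α)
          ≤ ((n:ℝ)*bt t^2/8)*x + d/x + (x - η t)^2/(2*α) := by
      intro x hx
      have h := hmin t ht x hx
      rw [hML t ht (η (t+1)), hML t ht x] at h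
      have e1 : η (t+1) * (n:ℝ) * bt t^2/8 = ((n:ℝ)*bt t^2/8)*(η (t+1)) := by ring
      have e2 : x * (n:ℝ) * bt t^2/8 = ((n:ℝ)*bt t^2/8)*x := by ring
      linarith only [h, e1.le, e1.ge, e2.le, e2.ge]
    have hstep := ewa_step (1/(n:ℝ)) ((n:ℝ)*bt t^2/8) d α L
      (η t) (η (t+1)) u hlo hc hd hαpos hLc (hmem t ht) (hηmem t ht) humem hminx
    have hval : s t ≤ m t + (((n:ℝ)*bt t^2/8)*(η t) + d/(η t)) := by
      have h := hs t ht
      rw [hML t ht (η t)] at h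
      have e1 : η t * (n:ℝ) * bt t^2/8 = ((n:ℝ)*bt t^2/8)*(η t) := by ring
      linarith only [h, e1.le, e1.ge]
    have hcu : ((n:ℝ)*bt t^2/8)*u + d/u
        ≤ b * Real.sqrt ((n:ℝ)*d/2) + d + b^2/8 := by
      have hsq : bt t^2 ≤ b^2 := pow_le_pow_left₀ hbt0' (hble t ht) 2
      have h1 : ((n:ℝ)*bt t^2/8)*u ≤ u*((n:ℝ)*b^2/8) := by
        have h2 := mul_le_mul_of_nonneg_left hsq
          (show 0 ≤ u*(n:ℝ)/8 by positivity)
        linarith only [h2]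
      linarith only [hucomp, h1]
    linarith only [hstep, hval, hcu]
  have hsum := Finset.sum_le_sum key
  have htel := ewa_tele (fun t => (u - η t)^2/(2*α)) T
  have hcardIcc : (Finset.Icc 1 T).card = T := by
    rw [Nat.card_Icc]; omega
  rw [Finset.sum_add_distrib, Finset.sum_add_distrib, Finset.sum_add_distrib,
    Finset.sum_const, Finset.sum_const, htel, hcardIcc, nsmul_eq_mul, nsmul_eq_mul] at hsum
  have hf1 : (u - η 1)^2/(2*α) ≤ 1/(2*α) := by
    rw [hη1]
    apply (div_le_div_iff_of_pos_right (by linarith)).mpr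
    nlinarith [humem.2]
  have hfT : 0 ≤ (u - η (T+1))^2/(2*α) := by positivity
  have halpha := ewa_alpha L α T hT hLpos (by rw [hαdef])
  have h1 : (1:ℝ)/(2*α) + (T:ℝ)*(α*L^2/2) ≤ L * Real.sqrt (2*(T:ℝ)) := by
    have e : (T:ℝ)*(α*L^2/2) = (T:ℝ)*α*L^2/2 := by ring
    rw [e]; exact halpha
  have h3 : (T:ℝ)*(b * Real.sqrt ((n:ℝ)*d/2) + d + b^2/8)
      = b * (T:ℝ) * Real.sqrt ((n:ℝ)*d/2) + (T:ℝ) * d + b^2*(T:ℝ)/8 := by ring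
  rw [← hLdef]
  linarith only [hsum, h1, h3.le, h3.ge, hf1, hfT]

/-- Theorem 2 of the paper: meta-learning the learning rate η of exponentially
    weighted aggregation (EWA) over a finite set Θ₀ of M predictors via OPMS. -/
theorem ewa_rate_meta_learning_regret
    (n T M : ℕ) (hn : 1 ≤ n) (hT : 1 ≤ T) (hM : 1 ≤ M)
    (B : ℝ) (hB : 0 < B)
    (Θ₀ : Type*) [Fintype Θ₀] (hcard : Fintype.card Θ₀ = M)
    (ℓ : ℕ → ℕ → Θ₀ → ℝ)
    (hbound : ∀ t ∈ Finset.Icc 1 T, ∀ i ∈ Finset.Icc 1 n, ∀ θ : Θ₀,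
      ℓ t i θ ∈ Set.Icc 0 B)
    (bt : ℕ → ℝ)
    (hbt : ∀ t ∈ Finset.Icc 1 T,
      IsGreatest {r : ℝ | ∃ θ : Θ₀, ∃ i ∈ Finset.Icc 1 n, r = ℓ t i θ} (bt t))
    (b : ℝ) (hb : IsGreatest {r : ℝ | ∃ t ∈ Finset.Icc 1 T, r = bt t} b)
    (ML : ℕ → ℝ → ℝ)
    (hML : ∀ t ∈ Finset.Icc 1 T, ∀ η : ℝ,
      ML t η = sInf {r : ℝ | ∃ θ : Θ₀, r = ∑ i ∈ Finset.Icc 1 n, ℓ t i θ} +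
        η * n * bt t ^ 2 / 8 + Real.log M / η)
    (L α : ℝ)
    (hLdef : L = (n : ℝ) ^ 2 * Real.log M + n * B ^ 2 / 8)
    (hαdef : α = (1 / L) * Real.sqrt (2 / T))
    (η : ℕ → ℝ) (hη1 : η 1 = 1)
    (hηmem : ∀ t ∈ Finset.Icc 1 T, η (t + 1) ∈ Set.Icc (1 / (n : ℝ)) 1)
    (hmin : ∀ t ∈ Finset.Icc 1 T, ∀ x ∈ Set.Icc (1 / (n : ℝ)) 1,
      ML t (η (t + 1)) + (η (t + 1) - η t) ^ 2 / (2 * α) ≤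
        ML t x + (x - η t) ^ 2 / (2 * α))
    (s : ℕ → ℝ) (hs : ∀ t ∈ Finset.Icc 1 T, s t ≤ ML t (η t)) :
    ∑ t ∈ Finset.Icc 1 T, s t ≤
      ∑ t ∈ Finset.Icc 1 T, sInf {r : ℝ | ∃ θ : Θ₀, r = ∑ i ∈ Finset.Icc 1 n, ℓ t i θ}
      + b * T * Real.sqrt ((n : ℝ) * Real.log M / 2)
      + T * Real.log M
      + b ^ 2 * T / 8
      + ((n : ℝ) ^ 2 * Real.log M + n * B ^ 2 / 8) * Real.sqrt (2 * T) := by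
  have hbtmem : ∀ t ∈ Finset.Icc 1 T, bt t ∈ Set.Icc (0:ℝ) B := by
    intro t ht
    obtain ⟨θ, i, hi, hbti⟩ := (hbt t ht).1
    rw [hbti]
    exact hbound t ht i hi θ
  have hbmem : b ∈ Set.Icc (0:ℝ) B := by
    obtain ⟨t, ht, hbt'⟩ := hb.1
    rw [hbt']
    exact hbtmem t ht
  have hd : 0 ≤ Real.log M := Real.log_nonneg (by exact_mod_cast hM)
  exact ewa_main n T hn hT B hB bt b (Real.log M) hd
    (fun t ht => (hbtmem t ht).1) (fun t ht => (hbtmem t ht).2)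
    (fun t ht => hb.2 ⟨t, ht, rfl⟩) hbmem.1
    (fun t => sInf {r : ℝ | ∃ θ : Θ₀, r = ∑ i ∈ Finset.Icc 1 n, ℓ t i θ})
    ML hML L α hLdef hαdef η hη1 hηmem hmin s hs
end

section
/- Let n, T ≥ 1 and M ≥ 1 be natural numbers, C > 0, and let Θ₀ = {θ^{(1)},…,θ^{(M)}} be a finite set of cardinality M. For t = 1,…,T and i = 1,…,n let ℓ_{t,i} : Θ₀ → ℝ, and let θ_t* ∈ Θ₀ minimize θ ↦ Σ_{i=1}^n ℓ_{t,i}(θ) over Θ₀. Let m* be the cardinality of the set {θ_1*, …, θ_T*}. Define Λ = { π ∈ ℝ^M : Σ_j π_j = 1 and π_j ≥ 1/(2M) for all j }, and for π ∈ Λ define L_t(π) = Σ_{i=1}^n ℓ_{t,i}(θ_t*) + C log(1/π(θ_t*)), where π(θ^{(j)}) = π_j. Set α = 1/(2CM√T). Let π_1 = (1/M,…,1/M) and, for t = 1,…,T, let π_{t+1} ∈ Λ minimize π ↦ L_t(π) + ‖π - π_t‖²/(2α) over Λ (Euclidean norm on ℝ^M). Suppose s_1,…,s_T ∈ ℝ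 satisfy s_t ≤ L_t(π_t) for each t. Then: Σ_{t=1}^T s_t ≤ Σ_{t=1}^T Σ_{i=1}^n ℓ_{t,i}(θ_t*) + C T log(2 m*) + 2CM√T. -/
set_option maxHeartbeats 1000000

open Finset

private lemma euclid_norm_sq_eq {M : ℕ} (v : EuclideanSpace ℝ (Fin M)) :
    ‖v‖ ^ 2 = ∑ j, (v j) ^ 2 := by
  rw [EuclideanSpace.norm_eq, Real.sq_sqrt (by positivity)]
  simp [sq_abs]

private lemma euclid_abs_coord_le_norm {M : ℕ} (v : EuclideanSpace ℝ (Fin M)) (j : Fin M) :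
    |v j| ≤ ‖v‖ := by
  have h : (v j) ^ 2 ≤ ‖v‖ ^ 2 := by
    rw [euclid_norm_sq_eq]
    exact Finset.single_le_sum (f := fun i => (v i) ^ 2) (fun i _ => sq_nonneg _) (mem_univ j)
  nlinarith [abs_nonneg (v j), norm_nonneg v, sq_abs (v j)]

/-- Three-point inequality for the proximal step, derived without gradients. -/
private lemma three_point {E : Type*} [NormedAddCommGroup E] [InnerProductSpace ℝ E]
    (f : E → ℝ) (S : Set E) (x p q : E) (α : ℝ) (hα : 0 < α)
    (hseg : ∀ l : ℝ, 0 < l → l ≤ 1 → p + l • (q - p) ∈ S ∧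
      f (p + l • (q - p)) ≤ (1 - l) * f p + l * f q)
    (hmin : ∀ r ∈ S, f p + ‖p - x‖ ^ 2 / (2 * α) ≤ f r + ‖r - x‖ ^ 2 / (2 * α)) :
    f p ≤ f q + (‖q - x‖ ^ 2 - ‖q - p‖ ^ 2 - ‖p - x‖ ^ 2) / (2 * α) := by
  set d : E := q - p with hd
  set ip : ℝ := inner ℝ (p - x) d with hip
  have hα' : (2 : ℝ) * α ≠ 0 := by positivity
  have key : ∀ l : ℝ, 0 < l → l ≤ 1 →
      f p ≤ f q + ip / α + l * (‖d‖ ^ 2 / (2 * α)) := by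
    intro l hl0 hl1
    obtain ⟨hmem, hcvx⟩ := hseg l hl0 hl1
    have hexp : ‖p + l • d - x‖ ^ 2
        = ‖p - x‖ ^ 2 + 2 * (l * ip) + l ^ 2 * ‖d‖ ^ 2 := by
      have he : p + l • d - x = (p - x) + l • d := by abel
      rw [he, norm_add_sq_real, real_inner_smul_right, norm_smul]
      try rw [Real.norm_eq_abs, mul_pow, sq_abs]
      try ring
    have h1 := hmin _ hmem
    have h1' : f p + ‖p - x‖ ^ 2 / (2 * α) ≤ (1 - l) * f p +
        l * (f q + ip / α + l * (‖d‖ ^ 2 / (2 * α))) + ‖p - x‖ ^ 2 / (2 * α) := by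
      calc f p + ‖p - x‖ ^ 2 / (2 * α)
          ≤ f (p + l • d) + ‖p + l • d - x‖ ^ 2 / (2 * α) := h1
        _ ≤ (1 - l) * f p + l * f q + ‖p + l • d - x‖ ^ 2 / (2 * α) := by linarith
        _ = (1 - l) * f p + l * (f q + ip / α + l * (‖d‖ ^ 2 / (2 * α)))
            + ‖p - x‖ ^ 2 / (2 * α) := by
            rw [hexp]; field_simp; ring
    have h2 : l * f p ≤ l * (f q + ip / α + l * (‖d‖ ^ 2 / (2 * α))) := by nlinarith
    exact le_of_mul_le_mul_left h2 hl0
  have hfp : f p ≤ f q + ip / α := by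
    refine le_of_forall_pos_le_add ?_
    intro ε hε
    set X : ℝ := ‖d‖ ^ 2 / (2 * α) with hX
    have hX0 : 0 ≤ X := by positivity
    rcases eq_or_lt_of_le hX0 with hX0' | hX0'
    · have := key 1 one_pos le_rfl
      rw [← hX0'] at this
      linarith
    · have hl0 : 0 < min 1 (ε / X) := lt_min one_pos (div_pos hε hX0')
      have hl := key _ hl0 (min_le_left _ _)
      have h3 : min 1 (ε / X) * X ≤ ε := by
        calc min 1 (ε / X) * X ≤ (ε / X) * X :=
              mul_le_mul_of_nonneg_right (min_le_right _ _) hX0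
          _ = ε := div_mul_cancel₀ _ hX0'.ne'
      linarith
  have hid : ‖q - x‖ ^ 2 = ‖p - x‖ ^ 2 + 2 * ip + ‖d‖ ^ 2 := by
    have he : q - x = (p - x) + d := by rw [hd]; abel
    rw [he, norm_add_sq_real, ← hip]
  have h3 : ‖q - x‖ ^ 2 - ‖q - p‖ ^ 2 - ‖p - x‖ ^ 2 = 2 * ip := by
    rw [← hd]; linarith
  rw [h3]
  have h4 : 2 * ip / (2 * α) = ip / α := by field_simp
  linarith [hfp, h4.le, h4.ge]

/-- Theorem 3 of the paper: meta-learning the prior of exponentially weighted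
    aggregation (EWA) over a finite set Θ₀ = {θ^{(1)},…,θ^{(M)}} (identified with
    Fin M) via OPMS on the restricted simplex. -/
theorem ewa_prior_meta_learning_regret
    (n T M : ℕ) (hn : 1 ≤ n) (hT : 1 ≤ T) (hM : 1 ≤ M) (C : ℝ) (hC : 0 < C)
    (ℓ : ℕ → ℕ → Fin M → ℝ)
    (θstar : ℕ → Fin M)
    (hθstar : ∀ t ∈ Finset.Icc 1 T, ∀ j : Fin M,
      ∑ i ∈ Finset.Icc 1 n, ℓ t i (θstar t) ≤ ∑ i ∈ Finset.Icc 1 n, ℓ t i j)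
    (mstar : ℕ) (hmstar : mstar = ((Finset.Icc 1 T).image θstar).card)
    (Λ : Set (EuclideanSpace ℝ (Fin M)))
    (hΛ : Λ = {π : EuclideanSpace ℝ (Fin M) |
      ∑ j, π j = 1 ∧ ∀ j, 1 / (2 * (M : ℝ)) ≤ π j})
    (ML : ℕ → EuclideanSpace ℝ (Fin M) → ℝ)
    (hML : ∀ t ∈ Finset.Icc 1 T, ∀ π : EuclideanSpace ℝ (Fin M),
      ML t π = ∑ i ∈ Finset.Icc 1 n, ℓ t i (θstar t) +
        C * Real.log (1 / π (θstar t)))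
    (α : ℝ) (hα : α = 1 / (2 * C * M * Real.sqrt T))
    (π : ℕ → EuclideanSpace ℝ (Fin M))
    (hπ1 : ∀ j : Fin M, π 1 j = 1 / (M : ℝ))
    (hπmem : ∀ t ∈ Finset.Icc 1 T, π (t + 1) ∈ Λ)
    (hmin : ∀ t ∈ Finset.Icc 1 T, ∀ q ∈ Λ,
      ML t (π (t + 1)) + ‖π (t + 1) - π t‖ ^ 2 / (2 * α) ≤
        ML t q + ‖q - π t‖ ^ 2 / (2 * α))
    (s : ℕ → ℝ) (hs : ∀ t ∈ Finset.Icc 1 T, s t ≤ ML t (π t)) :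
    ∑ t ∈ Finset.Icc 1 T, s t ≤
      ∑ t ∈ Finset.Icc 1 T, ∑ i ∈ Finset.Icc 1 n, ℓ t i (θstar t)
      + C * T * Real.log (2 * mstar)
      + 2 * C * M * Real.sqrt T := by
  have hN0 : (0 : ℝ) < M := by exact_mod_cast hM
  have hT0 : (0 : ℝ) < T := by exact_mod_cast hT
  have hsT : 0 < Real.sqrt T := Real.sqrt_pos.mpr hT0
  set β : ℝ := C * M * Real.sqrt T with hβdef
  have hβ0 : 0 < β := by positivity
  have hα0 : 0 < α := by rw [hα]; positivity
  have hαval : α = 1 / (2 * β) := by rw [hα, hβdef]; ring_nf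
  have hdiv : ∀ X : ℝ, X / (2 * α) = X * β := by
    intro X
    rw [hαval, show (2:ℝ) * (1/(2*β)) = β⁻¹ by field_simp, div_inv_eq_mul]
  -- the set of best predictors
  set S : Finset (Fin M) := (Finset.Icc 1 T).image θstar with hS
  have hSne : S.Nonempty := by
    refine ⟨θstar 1, ?_⟩
    rw [hS]
    exact Finset.mem_image_of_mem θstar (by simp [hT])
  have hm1 : 1 ≤ mstar := by
    rw [hmstar]; exact Finset.card_pos.mpr hSne
  have hm0 : (0 : ℝ) < mstar := by exact_mod_cast hm1
  -- the comparator prior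
  obtain ⟨πb, hπb_apply⟩ : ∃ v : EuclideanSpace ℝ (Fin M), ∀ j, v j
      = 1 / (2 * (M : ℝ)) + if j ∈ S then 1 / (2 * (mstar : ℝ)) else 0 :=
    ⟨WithLp.toLp 2 (fun j => 1 / (2 * (M : ℝ)) + if j ∈ S then 1 / (2 * (mstar : ℝ)) else 0),
      fun j => rfl⟩
  have hπb_sum : ∑ j, πb j = 1 := by
    simp only [hπb_apply, Finset.sum_add_distrib, Finset.sum_const, Finset.card_univ,
      Fintype.card_fin, Finset.sum_ite_mem, Finset.univ_inter, nsmul_eq_mul]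
    rw [← hmstar]
    field_simp
    ring
  have hπb_ge : ∀ j, 1 / (2 * (M : ℝ)) ≤ πb j := by
    intro j
    rw [hπb_apply]
    have : (0:ℝ) ≤ if j ∈ S then 1 / (2 * (mstar : ℝ)) else 0 := by positivity
    linarith
  have hπb_pos : ∀ j, 0 < πb j := fun j => lt_of_lt_of_le (by positivity) (hπb_ge j)
  have hπbΛ : πb ∈ Λ := by rw [hΛ]; exact ⟨hπb_sum, hπb_ge⟩
  have hπb_le1 : ∀ j, πb j ≤ 1 := by
    intro j
    rw [← hπb_sum]
    exact Finset.single_le_sum (fun i _ => (hπb_pos i).le) (mem_univ j)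
  have hπbθ : ∀ t ∈ Finset.Icc 1 T, 1 / (2 * (mstar : ℝ)) ≤ πb (θstar t) := by
    intro t ht
    have hmem : θstar t ∈ S := by rw [hS]; exact Finset.mem_image_of_mem θstar ht
    rw [hπb_apply, if_pos hmem]
    have : (0:ℝ) ≤ 1 / (2 * (M:ℝ)) := by positivity
    linarith
  -- coordinates of all iterates are bounded below
  have hcoords : ∀ t ∈ Finset.Icc 1 T, ∀ j, 1 / (2 * (M : ℝ)) ≤ π t j := by
    intro t ht j
    rw [Finset.mem_Icc] at ht
    rcases Nat.lt_or_ge t 2 with h2 | h2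
    · have ht1 : t = 1 := by omega
      rw [ht1, hπ1 j]
      rw [div_le_div_iff₀ (by positivity) hN0]
      nlinarith
    · have ht' : t - 1 ∈ Finset.Icc 1 T := by rw [Finset.mem_Icc]; omega
      have := hπmem (t - 1) ht'
      rw [show t - 1 + 1 = t by omega, hΛ] at this
      exact this.2 j
  obtain ⟨g, hgdef⟩ : ∃ g : ℕ → ℝ, ∀ t, g t = ‖πb - π t‖ ^ 2 :=
    ⟨fun t => ‖πb - π t‖ ^ 2, fun t => rfl⟩
  -- key per-round bound
  have hkey : ∀ t ∈ Finset.Icc 1 T, s t ≤ (∑ i ∈ Finset.Icc 1 n, ℓ t i (θstar t))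
      + C * Real.log (2 * (mstar : ℝ)) + β / T + (g t - g (t + 1)) * β := by
    intro t ht
    set j : Fin M := θstar t with hj
    set p : EuclideanSpace ℝ (Fin M) := π (t + 1) with hp
    set x : EuclideanSpace ℝ (Fin M) := π t with hx
    have hpΛ : p ∈ Λ := hπmem t ht
    have hpΛ' := hpΛ; rw [hΛ] at hpΛ'
    obtain ⟨hpsum, hpge⟩ := hpΛ'
    have hppos : ∀ k, 0 < p k := fun k => lt_of_lt_of_le (by positivity) (hpge k)
    have hxge : ∀ k, 1 / (2 * (M : ℝ)) ≤ x k := hcoords t ht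
    have hxpos : ∀ k, 0 < x k := fun k => lt_of_lt_of_le (by positivity) (hxge k)
    obtain ⟨f, hfdef⟩ : ∃ f : EuclideanSpace ℝ (Fin M) → ℝ,
        ∀ v, f v = C * Real.log (1 / v j) :=
      ⟨fun v => C * Real.log (1 / v j), fun v => rfl⟩
    have hfeq : ∀ v : EuclideanSpace ℝ (Fin M), 0 < v j → f v = -(C * Real.log (v j)) := by
      intro v hv
      rw [hfdef]
      simp [one_div, Real.log_inv]
    -- minimality in terms of f
    have hminf : ∀ r ∈ Λ, f p + ‖p - x‖ ^ 2 / (2 * α) ≤ f r + ‖r - x‖ ^ 2 / (2 * α) := by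
      intro r hr
      have h := hmin t ht r hr
      rw [hML t ht (π (t+1)), hML t ht r] at h
      rw [hfdef p, hfdef r]
      simp only [← hj, ← hp, ← hx] at h ⊢
      linarith
    -- segment condition (convexity of f along segments towards πb, and membership)
    have hseg : ∀ l : ℝ, 0 < l → l ≤ 1 → p + l • (πb - p) ∈ Λ ∧
        f (p + l • (πb - p)) ≤ (1 - l) * f p + l * f πb := by
      intro l hl0 hl1
      have happly : ∀ k, (p + l • (πb - p)) k = (1 - l) * p k + l * πb k := by
        intro k; simp; ring
      have hmemΛ : p + l • (πb - p) ∈ Λ := by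
        rw [hΛ]
        constructor
        · rw [Finset.sum_congr rfl (fun k _ => happly k)]
          rw [Finset.sum_add_distrib, ← Finset.mul_sum, ← Finset.mul_sum, hπb_sum, hpsum]
          ring
        · intro k
          rw [happly k]
          nlinarith [hpge k, hπb_ge k]
      refine ⟨hmemΛ, ?_⟩
      have hkj : (p + l • (πb - p)) j = (1 - l) * p j + l * πb j := happly j
      have hargpos : 0 < (1 - l) * p j + l * πb j := by
        nlinarith [hppos j, hπb_pos j]
      have hconc := (strictConcaveOn_log_Ioi.concaveOn).2
        (Set.mem_Ioi.mpr (hppos j)) (Set.mem_Ioi.mpr (hπb_pos j))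
        (by linarith : (0:ℝ) ≤ 1 - l) hl0.le (by ring)
      simp only [smul_eq_mul] at hconc
      rw [hfeq _ (by rw [hkj]; exact hargpos), hfeq _ (hppos j), hfeq _ (hπb_pos j), hkj]
      nlinarith [hconc, hC.le, mul_le_mul_of_nonneg_left hconc hC.le]
    -- three point inequality
    have h3pt := three_point f Λ x p πb α hα0 hseg hminf
    -- Lipschitz step
    have hlip : f x ≤ f p + 2 * C * M * ‖p - x‖ := by
      have hlog : Real.log (p j) - Real.log (x j) ≤ 2 * (M : ℝ) * |p j - x j| := by
        have hq : Real.log (p j) - Real.log (x j) = Real.log (p j / x j) := by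
          rw [Real.log_div (hppos j).ne' (hxpos j).ne']
        have hle := Real.log_le_sub_one_of_pos (div_pos (hppos j) (hxpos j))
        have h1 : p j - x j ≤ 2 * (M:ℝ) * x j * |p j - x j| := by
          have hx1 : 1 ≤ 2 * (M:ℝ) * x j := by
            have := hxge j
            rw [div_le_iff₀ (by positivity)] at this
            linarith
          nlinarith [le_abs_self (p j - x j), abs_nonneg (p j - x j)]
        have h2 : p j / x j - 1 ≤ 2 * (M:ℝ) * |p j - x j| := by
          rw [div_sub_one (hxpos j).ne', div_le_iff₀ (hxpos j)]
          nlinarith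
        linarith [hq.le, hq.ge]
      have hcoord : |p j - x j| ≤ ‖p - x‖ := by
        have := euclid_abs_coord_le_norm (p - x) j
        simpa using this
      rw [hfeq x (hxpos j), hfeq p (hppos j)]
      nlinarith [mul_le_mul_of_nonneg_left hlog hC.le,
        mul_le_mul_of_nonneg_left hcoord (by positivity : (0:ℝ) ≤ 2 * C * M * 1),
        mul_le_mul_of_nonneg_right hcoord (by positivity : (0:ℝ) ≤ 2 * C * M)]
    -- AM-GM step
    have hamgm : 2 * C * M * ‖p - x‖ - ‖p - x‖ ^ 2 * β ≤ β / T := by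
      rw [le_div_iff₀ hT0] at *
      have hu : Real.sqrt T ^ 2 = (T:ℝ) := Real.sq_sqrt hT0.le
      have hcert : 0 ≤ (C * M * Real.sqrt T) * (Real.sqrt T * ‖p - x‖ - 1)^2 := by positivity
      rw [hβdef]
      nlinarith [hcert, hu, norm_nonneg (p - x)]
    -- comparator value
    have hfb : f πb ≤ C * Real.log (2 * (mstar : ℝ)) := by
      rw [hfdef]
      have h1 : 1 / πb j ≤ 2 * (mstar : ℝ) := by
        rw [div_le_iff₀ (hπb_pos j), hj]
        have h2m : (0:ℝ) < 2 * mstar := by positivity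
        have h4 := (div_le_iff₀ h2m).mp (hπbθ t ht)
        nlinarith [h4]
      have hlog := Real.log_le_log (one_div_pos.mpr (hπb_pos j)) h1
      exact mul_le_mul_of_nonneg_left hlog hC.le
    -- assemble
    have hML' := hML t ht (π t)
    have hst := hs t ht
    have hgt : g t = ‖πb - x‖ ^ 2 := by rw [hgdef, hx]
    have hgt1 : g (t + 1) = ‖πb - p‖ ^ 2 := by rw [hgdef, hp]
    have hrw1 : (‖πb - x‖ ^ 2 - ‖πb - p‖ ^ 2 - ‖p - x‖ ^ 2) / (2 * α)
        = (g t - g (t + 1)) * β - ‖p - x‖ ^ 2 * β := by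
      rw [hdiv, hgt, hgt1]; ring
    rw [hrw1] at h3pt
    have hfx : f x = C * Real.log (1 / x j) := hfdef x
    have : s t ≤ (∑ i ∈ Finset.Icc 1 n, ℓ t i (θstar t)) + f x := by
      rw [hML'] at hst
      rw [hfx, hj, hx]
      exact hst
    linarith
  -- sum everything up
  have hsum : ∑ t ∈ Finset.Icc 1 T, s t ≤
      ∑ t ∈ Finset.Icc 1 T, ∑ i ∈ Finset.Icc 1 n, ℓ t i (θstar t)
      + T * (C * Real.log (2 * (mstar:ℝ))) + T * (β / T)
      + (∑ t ∈ Finset.Icc 1 T, (g t - g (t + 1))) * β := by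
    have h := Finset.sum_le_sum hkey
    rw [Finset.sum_add_distrib, Finset.sum_add_distrib, Finset.sum_add_distrib,
      ← Finset.sum_mul] at h
    simp only [Finset.sum_const, Nat.card_Icc, Nat.add_sub_cancel, nsmul_eq_mul] at h
    rw [← Finset.sum_mul] at h
    linarith
  have htel : ∑ t ∈ Finset.Icc 1 T, (g t - g (t + 1)) = g 1 - g (T + 1) := by
    have : Finset.Icc 1 T = Finset.Ico 1 (T + 1) := by
      rw [Finset.Ico_add_one_right_eq_Icc]
    rw [this, Finset.sum_Ico_eq_sum_range]
    simp only [Nat.add_sub_cancel]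
    have := Finset.sum_range_sub' (fun i => g (1 + i)) T
    simp only [Nat.add_zero] at this
    calc ∑ i ∈ Finset.range T, (g (1 + i) - g (1 + i + 1))
        = ∑ i ∈ Finset.range T, ((fun i => g (1 + i)) i - (fun i => g (1 + i)) (i + 1)) := by
          apply Finset.sum_congr rfl
          intro i _
          simp only []
          rw [show 1 + i + 1 = 1 + (i + 1) by ring]
      _ = g (1 + 0) - g (1 + T) := Finset.sum_range_sub' _ T
      _ = g 1 - g (T + 1) := by rw [Nat.add_zero, Nat.add_comm]
  -- bound g 1 ≤ 1
  have hg1 : g 1 ≤ 1 := by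
    have hg1eq : g 1 = ∑ k, (πb k - π 1 k) ^ 2 := by
      rw [hgdef, euclid_norm_sq_eq]
      apply Finset.sum_congr rfl
      intro k _
      simp
    rw [hg1eq]
    have hstep : ∀ k : Fin M, (πb k - π 1 k) ^ 2
        ≤ πb k - 2 / (M:ℝ) * πb k + 1 / (M:ℝ)^2 := by
      intro k
      rw [hπ1 k]
      have h1 := hπb_pos k
      have h2 := hπb_le1 k
      have : (πb k - 1/(M:ℝ))^2 = πb k ^ 2 - 2/(M:ℝ) * πb k + 1/(M:ℝ)^2 := by
        field_simp; ring
      nlinarith [mul_nonneg h1.le (sub_nonneg.mpr h2)]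
    calc ∑ k, (πb k - π 1 k) ^ 2
        ≤ ∑ k : Fin M, (πb k - 2 / (M:ℝ) * πb k + 1 / (M:ℝ)^2) :=
          Finset.sum_le_sum (fun k _ => hstep k)
      _ = (∑ k, πb k) - 2/(M:ℝ) * (∑ k, πb k) + M * (1/(M:ℝ)^2) := by
          rw [Finset.sum_add_distrib, Finset.sum_sub_distrib, ← Finset.mul_sum,
            Finset.sum_const, Finset.card_univ, Fintype.card_fin, nsmul_eq_mul]
      _ = 1 - 2/(M:ℝ) + 1/(M:ℝ) := by rw [hπb_sum]; field_simp
      _ ≤ 1 := by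
          have : 1/(M:ℝ) ≤ 2/(M:ℝ) := by
            rw [div_le_div_iff₀ hN0 hN0]; nlinarith
          linarith
  have hgT1 : 0 ≤ g (T + 1) := by rw [hgdef]; positivity
  have hTβ : (T:ℝ) * (β / T) = β := by field_simp
  have hfin : (∑ t ∈ Finset.Icc 1 T, (g t - g (t + 1))) * β ≤ β := by
    rw [htel]
    nlinarith [hg1, hgT1, hβ0]
  have h2β : 2 * C * (M:ℝ) * Real.sqrt T = 2 * β := by rw [hβdef]; ring
  rw [h2β]
  have : C * (T:ℝ) * Real.log (2 * (mstar:ℝ)) = (T:ℝ) * (C * Real.log (2 * (mstar:ℝ))) := by ring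
  rw [this]
  push_cast
  linarith [hsum, hfin, hTβ.le, hTβ.ge]
end
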